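/- arXiv:1804.00728 — 7 statements merged into one kernel-verified Lean document; each statement's English description precedes it below -/
import Mathlib

section
/- Let G be a torsion group and let n be an element order of G such that Ω(n) (the number of prime factors counted with multiplicity) is maximum among all element orders. Then the proper reduced power graph RP*(G) is Ω(n)-partite, and its clique number and chromatic number both equal Ω(n). -/
open SimpleGraph

/-- The reduced power graph of a group. -/
def redPowGraph (G : Type*) [Group G] : SimpleGraph G where
  Adj u v := Subgroup.zpowers u < Subgroup.zpowers v ∨ Subgroup.zpowers v < Subgroup.zpowers u
  symm := ⟨fun u v h => h.symm⟩
  loopless := ⟨fun u h => by cases h <;> simp_all⟩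

/-- The proper reduced power graph: induced subgraph on the non-identity elements. -/
def properRedPowGraph (G : Type*) [Group G] : SimpleGraph {x : G // x ≠ 1} :=
  SimpleGraph.comap Subtype.val (redPowGraph G)

/-- Ω(n): number of prime factors counted with multiplicity. -/
def bigOmega (n : ℕ) : ℕ := n.primeFactorsList.length

lemma bigOmega_pos {m : ℕ} (h0 : m ≠ 0) (h1 : m ≠ 1) : 0 < bigOmega m := by
  rw [bigOmega, List.length_pos_iff]
  intro h
  have := Nat.prod_primeFactorsList h0
  rw [h] at this
  simp at this
  exact h1 this.symm

lemma bigOmega_lt_of_dvd {a b : ℕ} (hb : b ≠ 0) (hd : a ∣ b) (hne : a ≠ b) :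
    bigOmega a < bigOmega b := by
  have ha : a ≠ 0 := by rintro rfl; exact hb (Nat.eq_zero_of_zero_dvd hd)
  obtain ⟨c, rfl⟩ := hd
  have hc : c ≠ 0 := by rintro rfl; simp at hb
  have hc1 : c ≠ 1 := by rintro rfl; simp at hne
  have hperm := (Nat.perm_primeFactorsList_mul ha hc).length_eq
  have hcpos := bigOmega_pos hc hc1
  simp only [bigOmega] at *
  rw [hperm, List.length_append]
  omega

lemma zpowers_eq_of_le_of_orderOf_eq {G : Type*} [Group G] {u v : G} (hv : IsOfFinOrder v)
    (hle : Subgroup.zpowers u ≤ Subgroup.zpowers v) (heq : orderOf u = orderOf v) :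
    Subgroup.zpowers u = Subgroup.zpowers v := by
  apply SetLike.ext'
  refine Set.eq_of_subset_of_ncard_le hle ?_ hv.finite_zpowers
  rw [← Nat.card_coe_set_eq, ← Nat.card_coe_set_eq]
  have : Nat.card (Subgroup.zpowers u) = Nat.card (Subgroup.zpowers v) := by
    rw [Nat.card_zpowers, Nat.card_zpowers, heq]
  simpa using this.ge

lemma omega_lt_of_zpowers_lt {G : Type*} [Group G] {u v : G} (hv : IsOfFinOrder v)
    (h : Subgroup.zpowers u < Subgroup.zpowers v) :
    bigOmega (orderOf u) < bigOmega (orderOf v) := by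
  have hvne : orderOf v ≠ 0 := hv.orderOf_pos.ne'
  have hdvd : orderOf u ∣ orderOf v := by
    rw [← Nat.card_zpowers v]
    exact Subgroup.orderOf_dvd_natCard _ (h.le (Subgroup.mem_zpowers u))
  refine bigOmega_lt_of_dvd hvne hdvd fun heq => ?_
  exact h.ne (zpowers_eq_of_le_of_orderOf_eq hv h.le heq)

/-- For a torsion group `G` and an element order `n` maximizing Ω, the proper
reduced power graph is Ω(n)-partite, and its clique number and chromatic number equal Ω(n). -/
theorem stmt0 {G : Type*} [Group G] (hT : ∀ x : G, IsOfFinOrder x)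
    (n : ℕ) (hn : ∃ x : G, orderOf x = n)
    (hmax : ∀ y : G, bigOmega (orderOf y) ≤ bigOmega n) :
    (properRedPowGraph G).Colorable (bigOmega n) ∧
    IsGreatest {k | ∃ s, (properRedPowGraph G).IsNClique k s} (bigOmega n) ∧
    (properRedPowGraph G).chromaticNumber = (bigOmega n : ℕ∞) := by
  classical
  obtain ⟨x, rfl⟩ := hn
  set n := orderOf x with hnx
  have hn0 : n ≠ 0 := (hT x).orderOf_pos.ne'
  set k := bigOmega n with hk
  -- basic facts about vertices
  have hv1 : ∀ v : {x : G // x ≠ 1}, 1 ≤ bigOmega (orderOf v.val) := by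
    intro v
    refine bigOmega_pos ((hT v.val).orderOf_pos.ne') fun h => v.2 (orderOf_eq_one_iff.mp h)
  have hvk : ∀ v : {x : G // x ≠ 1}, bigOmega (orderOf v.val) ≤ k := fun v => hmax v.val
  -- adjacency gives distinct Ω values
  have hadj : ∀ {a b : {x : G // x ≠ 1}}, (properRedPowGraph G).Adj a b →
      bigOmega (orderOf a.val) ≠ bigOmega (orderOf b.val) := by
    rintro a b (h | h)
    · exact (omega_lt_of_zpowers_lt (hT b.val) h).ne
    · exact (omega_lt_of_zpowers_lt (hT a.val) h).ne'
  -- Coloring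
  have hcol : (properRedPowGraph G).Colorable k := by
    refine ⟨SimpleGraph.Coloring.mk
      (fun v => ⟨bigOmega (orderOf v.val) - 1, by have := hv1 v; have := hvk v; omega⟩) ?_⟩
    intro a b h hfalse
    have h1 := hv1 a; have h2 := hv1 b
    have : bigOmega (orderOf a.val) - 1 = bigOmega (orderOf b.val) - 1 :=
      congrArg Fin.val hfalse
    exact hadj h (by omega)
  -- The clique of size k
  set L := n.primeFactorsList with hL
  have hLlen : L.length = k := rfl
  have hLprime : ∀ p ∈ L, Nat.Prime p := fun p hp => Nat.prime_of_mem_primeFactorsList hp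
  set d : ℕ → ℕ := fun i => (L.take i).prod with hd
  have hdomega : ∀ i, i ≤ k → bigOmega (d i) = i := by
    intro i hi
    have hlp : ∀ p ∈ L.take i, Nat.Prime p := fun p hp =>
      hLprime p (List.mem_of_mem_take hp)
    have := Nat.primeFactorsList_unique (l := L.take i) (n := d i) rfl hlp
    rw [bigOmega, this.length_eq.symm, List.length_take, hLlen]
    omega
  have hddvd : ∀ i j, i ≤ j → d i ∣ d j := by
    intro i j hij
    rw [hd]
    simp only
    rw [show L.take j = L.take i ++ (L.take j).drop i from by
      conv_lhs => rw [← List.take_append_drop i (L.take j)]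
      rw [List.take_take, Nat.min_eq_left hij]]
    rw [List.prod_append]
    exact Dvd.intro _ rfl
  have hdn : ∀ i, d i ∣ n := by
    intro i
    rcases le_or_gt i k with h | h
    · have := hddvd i k h
      rwa [show d k = n from by
        rw [hd]; simp only; rw [← hLlen, List.take_length, Nat.prod_primeFactorsList hn0]] at this
    · rw [hd]; simp only
      rw [List.take_of_length_le (by rw [hLlen]; omega), Nat.prod_primeFactorsList hn0]
  have hd0 : ∀ i, d i ≠ 0 := fun i h => hn0 (Nat.eq_zero_of_zero_dvd (h ▸ hdn i))
  -- order of x ^ (n / d)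
  have horder : ∀ i, i ≤ k → orderOf (x ^ (n / d i)) = d i := by
    intro i hi
    rw [(hT x).orderOf_pow, ← hnx, Nat.gcd_eq_right (Nat.div_dvd_of_dvd (hdn i)),
      Nat.div_div_self (hdn i) hn0]
  -- the elements
  have hne1 : ∀ i : Fin k, x ^ (n / d (i + 1)) ≠ 1 := by
    intro i h
    have h1 : orderOf (x ^ (n / d (i+1))) = d (i+1) := horder (i+1) i.2
    rw [h, orderOf_one] at h1
    have := hdomega (i+1) i.2
    rw [← h1] at this
    simp [bigOmega] at this
  set e : Fin k → {x : G // x ≠ 1} := fun i => ⟨x ^ (n / d (i + 1)), hne1 i⟩ with he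
  have heorder : ∀ i : Fin k, orderOf (e i).val = d (i + 1) := fun i => horder (i+1) i.2
  have heomega : ∀ i : Fin k, bigOmega (orderOf (e i).val) = i + 1 := by
    intro i; rw [heorder i, hdomega (i+1) i.2]
  have hchain : ∀ i j : Fin k, i ≤ j → Subgroup.zpowers (e i).val ≤ Subgroup.zpowers (e j).val := by
    intro i j hij
    rw [Subgroup.zpowers_le]
    have hab : d (i+1) ∣ d (j+1) := hddvd _ _ (by omega)
    have hbn : d (j+1) ∣ n := hdn _
    have key : (x ^ (n / d (j+1))) ^ (d (j+1) / d (i+1)) = x ^ (n / d (i+1)) := by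
      rw [← pow_mul]
      congr 1
      obtain ⟨c, hc⟩ := hab
      obtain ⟨m, hm⟩ := hbn
      have ha0 := Nat.pos_of_ne_zero (hd0 (i+1))
      have hb0 := Nat.pos_of_ne_zero (hd0 (j+1))
      have h1 : n / d (j+1) = m := by rw [hm, Nat.mul_div_cancel_left _ hb0]
      have h2 : d (j+1) / d (i+1) = c := by rw [hc, Nat.mul_div_cancel_left _ ha0]
      have h3 : n / d (i+1) = c * m := by
        rw [hm, hc, mul_assoc, Nat.mul_div_cancel_left _ ha0]
      rw [h1, h2, h3, mul_comm]
    show x ^ (n / d (↑i + 1)) ∈ Subgroup.zpowers (x ^ (n / d (↑j + 1)))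
    exact key ▸ (Subgroup.zpowers _).pow_mem (Subgroup.mem_zpowers _) _
  have hlt : ∀ i j : Fin k, i < j →
      Subgroup.zpowers (e i).val < Subgroup.zpowers (e j).val := by
    intro i j hij
    refine lt_of_le_of_ne (hchain i j hij.le) fun heq => ?_
    have : orderOf (e i).val = orderOf (e j).val := by
      rw [← Nat.card_zpowers, ← Nat.card_zpowers, heq]
    have h1 := heomega i; have h2 := heomega j
    rw [this, h2] at h1
    omega
  have hinj : Function.Injective e := by
    intro i j hij
    have := heomega i
    rw [hij, heomega j] at this
    exact Fin.ext (by omega)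
  have hclique : (properRedPowGraph G).IsNClique k (Finset.univ.image e) := by
    constructor
    · intro a ha b hb hab
      rw [Finset.coe_image] at ha hb
      obtain ⟨i, -, rfl⟩ := ha
      obtain ⟨j, -, rfl⟩ := hb
      have hij : i ≠ j := fun h => hab (by rw [h])
      rcases lt_or_gt_of_ne hij with h | h
      · exact Or.inl (hlt i j h)
      · exact Or.inr (hlt j i h)
    · rw [Finset.card_image_of_injective _ hinj, Finset.card_univ, Fintype.card_fin]
  -- upper bound on cliques
  have hub : ∀ k' ∈ {k' | ∃ s, (properRedPowGraph G).IsNClique k' s}, k' ≤ k := by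
    rintro k' ⟨s, hs⟩
    classical
    have hinj' : Set.InjOn (fun v : {x : G // x ≠ 1} => bigOmega (orderOf v.val)) s := by
      intro a ha b hb hfg
      by_contra hab
      exact hadj (hs.1 ha hb hab) hfg
    have hsub : s.image (fun v : {x : G // x ≠ 1} => bigOmega (orderOf v.val)) ⊆
        Finset.Icc 1 k := by
      intro m hm
      simp only [Finset.mem_image] at hm
      obtain ⟨v, -, rfl⟩ := hm
      exact Finset.mem_Icc.mpr ⟨hv1 v, hvk v⟩
    have := Finset.card_le_card hsub
    rw [Finset.card_image_of_injOn hinj', hs.2, Nat.card_Icc] at this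
    omega
  refine ⟨hcol, ⟨⟨_, hclique⟩, hub⟩, ?_⟩
  refine le_antisymm hcol.chromaticNumber_le ?_
  have h := hclique.1.card_le_chromaticNumber
  rwa [hclique.2] at h
end

section
/- Let G be a torsion group. Then RP*(G) is triangle-free if and only if Ω(n) ≤ 2 for every element order n of G; and RP(G) is triangle-free if and only if every non-identity element of G has prime order. -/
open SimpleGraph

lemma bigOmega_lt_of_dvd_s3 {d n : ℕ} (hdvd : d ∣ n) (hlt : d < n) (hd : 0 < d) :
    bigOmega d < bigOmega n := by
  obtain ⟨k, rfl⟩ := hdvd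
  have hk : k ≠ 0 := by rintro rfl; simp at hlt
  have hk1 : k ≠ 1 := by rintro rfl; simp at hlt
  have hlen := (Nat.perm_primeFactorsList_mul hd.ne' hk).length_eq
  have hknil : k.primeFactorsList ≠ [] := by
    rw [Ne, Nat.primeFactorsList_eq_nil]
    rintro (h | h) <;> contradiction
  have h1 : 1 ≤ k.primeFactorsList.length := List.length_pos_iff.mpr hknil
  unfold bigOmega
  rw [hlen, List.length_append]; omega

lemma bigOmega_pos_s3 {n : ℕ} (hn : 2 ≤ n) : 1 ≤ bigOmega n := by
  have hnil : n.primeFactorsList ≠ [] := by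
    rw [Ne, Nat.primeFactorsList_eq_nil]; omega
  exact List.length_pos_iff.mpr hnil

lemma bigOmega_prime {p : ℕ} (hp : p.Prime) : bigOmega p = 1 := by
  unfold bigOmega
  rw [Nat.primeFactorsList_prime hp]
  rfl

lemma bigOmega_div_prime {n p : ℕ} (hp : p.Prime) (hd : p ∣ n) (hn : n ≠ 0) :
    bigOmega (n / p) + 1 = bigOmega n := by
  obtain ⟨m, rfl⟩ := hd
  have hm : m ≠ 0 := by rintro rfl; simp at hn
  rw [Nat.mul_div_cancel_left m hp.pos]
  unfold bigOmega
  rw [(Nat.perm_primeFactorsList_mul hp.pos.ne' hm).length_eq, List.length_append,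
    Nat.primeFactorsList_prime hp]
  simp [Nat.add_comm]

lemma zpowers_lt_orderOf {G : Type*} [Group G] {a b : G} (hb : IsOfFinOrder b)
    (h : Subgroup.zpowers a < Subgroup.zpowers b) :
    orderOf a ∣ orderOf b ∧ orderOf a < orderOf b := by
  have hdvd := orderOf_dvd_of_mem_zpowers (h.le (Subgroup.mem_zpowers a))
  refine ⟨hdvd, lt_of_le_of_ne (Nat.le_of_dvd hb.orderOf_pos hdvd) fun he => ?_⟩
  have : Finite (Subgroup.zpowers b) := hb.finite_zpowers.to_subtype
  exact h.ne (Subgroup.eq_of_le_of_card_ge h.le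
    (by rw [Nat.card_zpowers, Nat.card_zpowers, he]))

/-- In a chain of three zpowers subgroups with bottom element non-identity,
the top element's order has at least 3 prime factors. -/
lemma three_le_bigOmega_of_chain {G : Type*} [Group G] (hT : ∀ x : G, IsOfFinOrder x)
    {a b c : G} (ha : a ≠ 1) (hab : Subgroup.zpowers a < Subgroup.zpowers b)
    (hbc : Subgroup.zpowers b < Subgroup.zpowers c) : 3 ≤ bigOmega (orderOf c) := by
  obtain ⟨h1, h2⟩ := zpowers_lt_orderOf (hT b) hab
  obtain ⟨h3, h4⟩ := zpowers_lt_orderOf (hT c) hbc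
  have hne : orderOf a ≠ 1 := fun h => ha (orderOf_eq_one_iff.mp h)
  have hpos := (hT a).orderOf_pos
  have l1 := bigOmega_pos_s3 (n := orderOf a) (by omega)
  have l2 := bigOmega_lt_of_dvd_s3 h1 h2 (by omega)
  have l3 := bigOmega_lt_of_dvd_s3 h3 h4 (by omega)
  omega

/-- If all non-identity elements have prime order, a chain of length 2 is impossible. -/
lemma no_chain_of_prime {G : Type*} [Group G] (hT : ∀ x : G, IsOfFinOrder x)
    (hP : ∀ x : G, x ≠ 1 → (orderOf x).Prime)
    {a b c : G} (hab : Subgroup.zpowers a < Subgroup.zpowers b)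
    (hbc : Subgroup.zpowers b < Subgroup.zpowers c) : False := by
  have hb1 : b ≠ 1 := by
    rintro rfl
    rw [Subgroup.zpowers_one_eq_bot] at hab
    exact not_lt_bot hab
  have hc1 : c ≠ 1 := by
    rintro rfl
    rw [Subgroup.zpowers_one_eq_bot] at hbc
    exact not_lt_bot hbc
  obtain ⟨h1, h2⟩ := zpowers_lt_orderOf (hT c) hbc
  have hpb := hP b hb1
  have hpc := hP c hc1
  have := (Nat.prime_dvd_prime_iff_eq hpb hpc).mp h1
  omega

lemma order_of_pow_prime {G : Type*} [Group G] {x : G} (hx : IsOfFinOrder x)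
    {p : ℕ} (hp : p.Prime) (hdvd : p ∣ orderOf x) :
    orderOf (x ^ p) = orderOf x / p := by
  rw [hx.orderOf_pow, Nat.gcd_eq_right hdvd]

lemma zpowers_pow_lt {G : Type*} [Group G] {x : G} (hx : IsOfFinOrder x)
    {p : ℕ} (hp : p.Prime) (hdvd : p ∣ orderOf x) :
    Subgroup.zpowers (x ^ p) < Subgroup.zpowers x := by
  refine lt_of_le_of_ne (Subgroup.zpowers_le.mpr (Subgroup.pow_mem _ (Subgroup.mem_zpowers x) p))
    fun he => ?_
  have hcard : orderOf (x ^ p) = orderOf x := by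
    rw [← Nat.card_zpowers, ← Nat.card_zpowers, he]
  rw [order_of_pow_prime hx hp hdvd] at hcard
  have h0 := hx.orderOf_pos
  have := Nat.div_lt_self h0 hp.one_lt
  omega

/-- For a torsion group G, RP*(G) is triangle-free iff Ω(n) ≤ 2 for every element
order n, and RP(G) is triangle-free iff every non-identity element has prime order. -/
theorem stmt3 {G : Type*} [Group G] (hT : ∀ x : G, IsOfFinOrder x) :
    ((properRedPowGraph G).CliqueFree 3 ↔ ∀ x : G, bigOmega (orderOf x) ≤ 2) ∧
    ((redPowGraph G).CliqueFree 3 ↔ ∀ x : G, x ≠ 1 → (orderOf x).Prime) := by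
  classical
  constructor
  · constructor
    · -- triangle-free → Ω ≤ 2
      intro hfree x
      by_contra hcon
      push_neg at hcon
      obtain ⟨n, hn⟩ : ∃ n, orderOf x = n := ⟨_, rfl⟩
      rw [hn] at hcon
      have hn0 : 0 < n := hn ▸ (hT x).orderOf_pos
      have hn1 : n ≠ 1 := by
        rintro rfl
        simp [bigOmega] at hcon
      have hn2 : 2 ≤ n := by omega
      have hp : n.minFac.Prime := Nat.minFac_prime hn1
      have hpd : n.minFac ∣ n := Nat.minFac_dvd n
      have hob : orderOf (x ^ n.minFac) = n / n.minFac := by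
        rw [order_of_pow_prime (hT x) hp (hn ▸ hpd), hn]
      have hΩnp : 2 ≤ bigOmega (n / n.minFac) := by
        have := bigOmega_div_prime hp hpd (by omega)
        omega
      have hnp0 : 0 < n / n.minFac := Nat.div_pos (Nat.minFac_le hn0) hp.pos
      have hnp1 : n / n.minFac ≠ 1 := by
        intro h
        rw [h] at hΩnp
        simp [bigOmega] at hΩnp
      set b := x ^ n.minFac with hbdef
      have hq : (n / n.minFac).minFac.Prime := Nat.minFac_prime hnp1
      have hqd : (n / n.minFac).minFac ∣ n / n.minFac := Nat.minFac_dvd _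
      set a := b ^ (n / n.minFac).minFac with hadef
      have hoa : orderOf a = (n / n.minFac) / (n / n.minFac).minFac := by
        rw [hadef, order_of_pow_prime (hT b) hq (hob ▸ hqd), hob]
      have hnpq0 : 0 < (n / n.minFac) / (n / n.minFac).minFac :=
        Nat.div_pos (Nat.minFac_le hnp0) hq.pos
      have ha1 : a ≠ 1 := by
        intro h
        rw [h, orderOf_one] at hoa
        have hh := Nat.div_mul_cancel hqd
        rw [← hoa, one_mul] at hh
        rw [← hh, bigOmega_prime hq] at hΩnp
        omega
      have hb1 : b ≠ 1 := by
        intro h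
        rw [h, orderOf_one] at hob
        have := Nat.div_lt_self hn0 hp.one_lt
        omega
      have hx1 : x ≠ 1 := by
        rintro rfl
        rw [orderOf_one] at hn
        omega
      have h1 : Subgroup.zpowers a < Subgroup.zpowers b :=
        zpowers_pow_lt (hT b) hq (hob ▸ hqd)
      have h2 : Subgroup.zpowers b < Subgroup.zpowers x :=
        zpowers_pow_lt (hT x) hp (hn ▸ hpd)
      exact hfree {⟨a, ha1⟩, ⟨b, hb1⟩, ⟨x, hx1⟩}
        (is3Clique_triple_iff.mpr ⟨Or.inl h1, Or.inl (h1.trans h2), Or.inl h2⟩)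
    · -- Ω ≤ 2 → triangle-free
      intro hΩ s hs
      rw [is3Clique_iff] at hs
      obtain ⟨a, b, c, hab, hac, hbc, -⟩ := hs
      have key : ∀ u v w : {x : G // x ≠ 1}, Subgroup.zpowers u.val < Subgroup.zpowers v.val →
          Subgroup.zpowers v.val < Subgroup.zpowers w.val → False := fun u v w h1 h2 => by
        have := three_le_bigOmega_of_chain hT u.2 h1 h2
        have := hΩ w.val
        omega
      rcases hab with h1 | h1 <;> rcases hac with h2 | h2 <;> rcases hbc with h3 | h3
      · exact key a b c h1 h3
      · exact key a c b h2 h3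
      · exact absurd (h1.trans (h3.trans h2)) (lt_irrefl _)
      · exact key c a b h2 h1
      · exact key b a c h1 h2
      · exact absurd (h2.trans (h3.trans h1)) (lt_irrefl _)
      · exact key b c a h3 h2
      · exact key c b a h3 h1
  · constructor
    · -- triangle-free → prime orders
      intro hfree x hx1
      by_contra hcon
      obtain ⟨n, hn⟩ : ∃ n, orderOf x = n := ⟨_, rfl⟩
      rw [hn] at hcon
      have hn0 : 0 < n := hn ▸ (hT x).orderOf_pos
      have hn1 : n ≠ 1 := fun h => hx1 (orderOf_eq_one_iff.mp (hn.trans h))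
      have hp : n.minFac.Prime := Nat.minFac_prime hn1
      have hpd : n.minFac ∣ n := Nat.minFac_dvd n
      set b := x ^ n.minFac with hbdef
      have hob : orderOf b = n / n.minFac := by
        rw [hbdef, order_of_pow_prime (hT x) hp (hn ▸ hpd), hn]
      have hnp0 : 0 < n / n.minFac := Nat.div_pos (Nat.minFac_le hn0) hp.pos
      have hnp1 : n / n.minFac ≠ 1 := by
        intro h
        have hh := Nat.div_mul_cancel hpd
        rw [h, one_mul] at hh
        exact hcon (hh ▸ hp)
      have hb1 : b ≠ 1 := by
        intro h
        rw [h, orderOf_one] at hob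
        omega
      have h2 : Subgroup.zpowers b < Subgroup.zpowers x :=
        zpowers_pow_lt (hT x) hp (hn ▸ hpd)
      have h1 : Subgroup.zpowers (1 : G) < Subgroup.zpowers b := by
        rw [Subgroup.zpowers_one_eq_bot]
        exact bot_lt_iff_ne_bot.mpr (Subgroup.zpowers_ne_bot.mpr hb1)
      exact hfree {(1 : G), b, x}
        (is3Clique_triple_iff.mpr ⟨Or.inl h1, Or.inl (h1.trans h2), Or.inl h2⟩)
    · -- prime orders → triangle-free
      intro hP s hs
      rw [is3Clique_iff] at hs
      obtain ⟨a, b, c, hab, hac, hbc, -⟩ := hs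
      have key := fun {u v w : G} => no_chain_of_prime hT hP (a := u) (b := v) (c := w)
      rcases hab with h1 | h1 <;> rcases hac with h2 | h2 <;> rcases hbc with h3 | h3
      · exact key h1 h3
      · exact key h2 h3
      · exact absurd (h1.trans (h3.trans h2)) (lt_irrefl _)
      · exact key h2 h1
      · exact key h1 h2
      · exact absurd (h2.trans (h3.trans h1)) (lt_irrefl _)
      · exact key h3 h2
      · exact key h3 h1
end

section
/- Let G be a finite group. Then RP*(G) is a complete bipartite graph if and only if G is isomorphic to ℤ_{p²}, ℤ_{pq}, or the quaternion group Q₈, where p and q are distinct primes. -/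
open SimpleGraph Subgroup

/-- A graph is complete k-partite if its vertices can be partitioned into k nonempty
independent sets with every pair of vertices in different parts adjacent. -/
def IsCompleteKPartite {V : Type*} (Γ : SimpleGraph V) (k : ℕ) : Prop :=
  ∃ P : V → Fin k, Function.Surjective P ∧ ∀ u v, Γ.Adj u v ↔ P u ≠ P v

section Helpers
variable {G : Type*} [Group G] [Fintype G]

lemma zpowers_lt_iff {x y : G} :
    zpowers x < zpowers y ↔ x ∈ zpowers y ∧ orderOf x ≠ orderOf y := by
  constructor
  · intro h
    refine ⟨h.le (mem_zpowers x), fun he => h.ne ?_⟩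
    refine Subgroup.eq_of_le_of_card_ge h.le ?_
    rw [Nat.card_zpowers, Nat.card_zpowers, he]
  · rintro ⟨hm, hne⟩
    refine lt_of_le_of_ne (zpowers_le.mpr hm) (fun he => hne ?_)
    rw [← Nat.card_zpowers, ← Nat.card_zpowers, he]

lemma adj_char {x y : G} :
    (zpowers x < zpowers y ∨ zpowers y < zpowers x) ↔
      ((x ∈ zpowers y ∨ y ∈ zpowers x) ∧ orderOf x ≠ orderOf y) := by
  rw [zpowers_lt_iff, zpowers_lt_iff]
  constructor
  · rintro (⟨h1, h2⟩ | ⟨h1, h2⟩)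
    · exact ⟨Or.inl h1, h2⟩
    · exact ⟨Or.inr h1, h2.symm⟩
  · rintro ⟨h1 | h1, h2⟩
    · exact Or.inl ⟨h1, h2⟩
    · exact Or.inr ⟨h1, h2.symm⟩

lemma exists_prime_pow_elt {x : G} (hx : x ≠ 1) :
    ∃ y : G, y ∈ zpowers x ∧ (orderOf y).Prime ∧
      (¬ (orderOf x).Prime → orderOf y ≠ orderOf x) := by
  set n := orderOf x with hn
  have hn1 : n ≠ 1 := fun h => hx (orderOf_eq_one_iff.mp h)
  have hn0 : n ≠ 0 := (orderOf_pos x).ne'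
  have hr : n.minFac.Prime := Nat.minFac_prime hn1
  refine ⟨x ^ (n / n.minFac), pow_mem (mem_zpowers x) _, ?_, ?_⟩
  · have hdvd : n / n.minFac ∣ n := Nat.div_dvd_of_dvd n.minFac_dvd
    have : orderOf (x ^ (n / n.minFac)) = n / (n / n.minFac) := by
      rw [orderOf_pow, ← hn, Nat.gcd_eq_right hdvd]
    rw [this, Nat.div_div_self n.minFac_dvd hn0]
    exact hr
  · intro hnp hcon
    have hdvd : n / n.minFac ∣ n := Nat.div_dvd_of_dvd n.minFac_dvd
    have : orderOf (x ^ (n / n.minFac)) = n.minFac := by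
      rw [orderOf_pow, ← hn, Nat.gcd_eq_right hdvd, Nat.div_div_self n.minFac_dvd hn0]
    rw [this] at hcon
    exact hnp (hcon ▸ hr)

end Helpers

def Key (G : Type*) [Group G] : Prop :=
  (∃ a : G, (orderOf a).Prime) ∧ (∃ b : G, b ≠ 1 ∧ ¬ (orderOf b).Prime) ∧
    ∀ x y : G, x ≠ 1 → y ≠ 1 →
      (((x ∈ zpowers y ∨ y ∈ zpowers x) ∧ orderOf x ≠ orderOf y) ↔
        ¬ ((orderOf x).Prime ↔ (orderOf y).Prime))

lemma fin2_ne_iff : ∀ a b c : Fin 2, a ≠ b ↔ ¬ (a = c ↔ b = c) := by decide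

lemma isCompleteBipartite_iff_key {G : Type*} [Group G] [Fintype G] :
    IsCompleteKPartite (properRedPowGraph G) 2 ↔ Key G := by
  have hAdj : ∀ u v : {x : G // x ≠ 1}, (properRedPowGraph G).Adj u v ↔
      (zpowers (u : G) < zpowers (v : G) ∨ zpowers (v : G) < zpowers (u : G)) :=
    fun u v => Iff.rfl
  constructor
  · rintro ⟨P, hsurj, hP⟩
    have hprime_same : ∀ u v : {x : G // x ≠ 1},
        (orderOf (u : G)).Prime → (orderOf (v : G)).Prime → P u = P v := by
      intro u v hu hv
      by_contra hne
      obtain ⟨hmem, hord⟩ := adj_char.mp ((hAdj u v).mp ((hP u v).mpr hne))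
      rcases hmem with h | h
      · exact hord ((Nat.prime_dvd_prime_iff_eq hu hv).mp (orderOf_dvd_of_mem_zpowers h))
      · exact hord (((Nat.prime_dvd_prime_iff_eq hv hu).mp (orderOf_dvd_of_mem_zpowers h)).symm)
    obtain ⟨u0, -⟩ := hsurj 0
    obtain ⟨a, hamem, hap, -⟩ := exists_prime_pow_elt u0.2
    have ha1 : a ≠ 1 := fun h => hap.ne_one (by rw [h, orderOf_one])
    set A : {x : G // x ≠ 1} := ⟨a, ha1⟩ with hA
    have hval : ∀ v : {x : G // x ≠ 1}, (P v = P A ↔ (orderOf (v : G)).Prime) := by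
      intro v
      constructor
      · intro hv
        by_contra hnp
        obtain ⟨y, hy, hyp, hyne⟩ := exists_prime_pow_elt v.2
        have hy1 : y ≠ 1 := fun h => hyp.ne_one (by rw [h, orderOf_one])
        have hadj : P ⟨y, hy1⟩ ≠ P v :=
          (hP ⟨y, hy1⟩ v).mp ((hAdj _ v).mpr (adj_char.mpr ⟨Or.inl hy, hyne hnp⟩))
        exact hadj ((hprime_same ⟨y, hy1⟩ A hyp hap).trans hv.symm)
      · intro hvp
        exact hprime_same v A hvp hap
    refine ⟨⟨a, hap⟩, ?_, ?_⟩
    · have hne : P A + 1 ≠ P A := by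
        simp only [ne_eq, Fin.ext_iff, Fin.val_add]
        omega
      obtain ⟨w, hw⟩ := hsurj (P A + 1)
      refine ⟨(w : G), w.2, fun hp => ?_⟩
      exact hne (hw ▸ (hval w).mpr hp)
    · intro x y hx hy
      rw [← adj_char, ← hAdj ⟨x, hx⟩ ⟨y, hy⟩, hP ⟨x, hx⟩ ⟨y, hy⟩,
        fin2_ne_iff _ _ (P A)]
      exact not_congr (iff_congr (hval ⟨x, hx⟩) (hval ⟨y, hy⟩))
  · rintro ⟨⟨a, hap⟩, ⟨b, hb1, hbnp⟩, H3⟩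
    classical
    have ha1 : a ≠ 1 := fun h => hap.ne_one (by rw [h, orderOf_one])
    refine ⟨fun v => if (orderOf (v : G)).Prime then 0 else 1, ?_, ?_⟩
    · intro i
      fin_cases i
      · exact ⟨⟨a, ha1⟩, by simp [hap]⟩
      · exact ⟨⟨b, hb1⟩, by simp [hbnp]⟩
    · intro u v
      rw [hAdj u v, adj_char, H3 u v u.2 v.2]
      by_cases h1 : (orderOf (u : G)).Prime <;> by_cases h2 : (orderOf (v : G)).Prime <;>
        simp [h1, h2]

lemma dvd_prime_mul' {p q d : ℕ} (hp : p.Prime) (hq : q.Prime) (hd : d ∣ p * q) :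
    d = 1 ∨ d = p ∨ d = q ∨ d = p * q := by
  by_cases hpd : p ∣ d
  · obtain ⟨m, rfl⟩ := hpd
    have hm : m ∣ q := (mul_dvd_mul_iff_left hp.pos.ne').mp hd
    rcases (Nat.Prime.eq_one_or_self_of_dvd hq m hm) with rfl | rfl
    · right; left; exact mul_one p
    · right; right; right; rfl
  · have hco : Nat.Coprime p d := (Nat.Prime.coprime_iff_not_dvd hp).mpr hpd
    have : d ∣ q := hco.symm.dvd_of_dvd_mul_left hd
    rcases (Nat.Prime.eq_one_or_self_of_dvd hq d this) with rfl | rfl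
    · left; rfl
    · right; right; left; rfl

lemma not_prime_mul'' {p q : ℕ} (hp : p.Prime) (hq : q.Prime) : ¬ (p * q).Prime := by
  rw [Nat.prime_mul_iff]
  rintro (⟨-, h⟩ | ⟨-, h⟩)
  · exact hq.ne_one h
  · exact hp.ne_one h

lemma key_cyclic {C : Type*} [Group C] [Fintype C] [IsCyclic C] {p q : ℕ}
    (hp : p.Prime) (hq : q.Prime) (hcard : Nat.card C = p * q) : Key C := by
  obtain ⟨g, hg⟩ := IsCyclic.exists_generator (α := C)
  have hgord : orderOf g = p * q := by
    rw [orderOf_eq_card_of_forall_mem_zpowers hg, hcard]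
  have hpqnp : ¬ (p * q).Prime := not_prime_mul'' hp hq
  have hpq_ne_p : p ≠ p * q := fun h => by nlinarith [hp.two_le, hq.two_le]
  have hpq_ne_q : q ≠ p * q := fun h => by nlinarith [hp.two_le, hq.two_le]
  have hords : ∀ x : C, x ≠ 1 → orderOf x = p ∨ orderOf x = q ∨ orderOf x = p * q := by
    intro x hx
    have hdvd : orderOf x ∣ p * q := hcard ▸ orderOf_dvd_natCard x
    rcases dvd_prime_mul' hp hq hdvd with h | h | h | h
    · exact absurd (orderOf_eq_one_iff.mp h) hx
    · exact Or.inl h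
    · exact Or.inr (Or.inl h)
    · exact Or.inr (Or.inr h)
  have htop : ∀ x : C, orderOf x = p * q → ∀ y : C, y ∈ zpowers x := by
    intro x hx y
    have : zpowers x = ⊤ := by
      apply Subgroup.eq_top_of_card_eq
      rw [Nat.card_zpowers, hx, hcard]
    rw [this]; exact mem_top y
  refine ⟨⟨g ^ q, ?_⟩, ⟨g, ?_, ?_⟩, ?_⟩
  · have : orderOf (g ^ q) = p := by
      rw [orderOf_pow, hgord, Nat.gcd_eq_right (dvd_mul_left q p),
        Nat.mul_div_cancel _ hq.pos]
    rw [this]; exact hp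
  · intro h; rw [h, orderOf_one] at hgord; nlinarith [hp.two_le, hq.two_le]
  · rw [hgord]; exact hpqnp
  · intro x y hx hy
    rcases hords x hx with h1 | h1 | h1 <;> rcases hords y hy with h2 | h2 | h2
    · exact iff_of_false (fun h => h.2 (h1.trans h2.symm)) (by simp [h1, h2, hp])
    · refine iff_of_false ?_ (by simp [h1, h2, hp, hq])
      rintro ⟨hm | hm, hne⟩
      · have := orderOf_dvd_of_mem_zpowers hm
        rw [h1, h2] at this
        exact hne (by rw [h1, h2, (Nat.prime_dvd_prime_iff_eq hp hq).mp this])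
      · have := orderOf_dvd_of_mem_zpowers hm
        rw [h1, h2] at this
        exact hne (by rw [h1, h2, (Nat.prime_dvd_prime_iff_eq hq hp).mp this])
    · exact iff_of_true ⟨Or.inl (htop y h2 x), by rw [h1, h2]; exact hpq_ne_p⟩
        (by simp [h1, h2, hp, hpqnp])
    · refine iff_of_false ?_ (by simp [h1, h2, hp, hq])
      rintro ⟨hm | hm, hne⟩
      · have := orderOf_dvd_of_mem_zpowers hm
        rw [h1, h2] at this
        exact hne (by rw [h1, h2, (Nat.prime_dvd_prime_iff_eq hq hp).mp this])
      · have := orderOf_dvd_of_mem_zpowers hm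
        rw [h1, h2] at this
        exact hne (by rw [h1, h2, (Nat.prime_dvd_prime_iff_eq hp hq).mp this])
    · exact iff_of_false (fun h => h.2 (h1.trans h2.symm)) (by simp [h1, h2, hq])
    · exact iff_of_true ⟨Or.inl (htop y h2 x), by rw [h1, h2]; exact hpq_ne_q⟩
        (by simp [h1, h2, hq, hpqnp])
    · exact iff_of_true ⟨Or.inr (htop x h1 y), by rw [h1, h2]; exact (hpq_ne_p).symm⟩
        (by simp [h1, h2, hp, hpqnp])
    · exact iff_of_true ⟨Or.inr (htop x h1 y), by rw [h1, h2]; exact (hpq_ne_q).symm⟩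
        (by simp [h1, h2, hq, hpqnp])
    · exact iff_of_false (fun h => h.2 (h1.trans h2.symm)) (by simp [h1, h2, hpqnp])

lemma dvd_four {d : ℕ} (h : d ∣ 4) : d = 1 ∨ d = 2 ∨ d = 4 := by
  have h1 : 1 ≤ d := Nat.pos_of_dvd_of_pos h (by norm_num)
  have h4 : d ≤ 4 := Nat.le_of_dvd (by norm_num) h
  interval_cases d <;> revert h <;> decide

lemma key_quaternion : Key (QuaternionGroup 2) := by
  have h4 : ∀ x : QuaternionGroup 2, x ^ 4 = 1 := by decide
  have h2 : ∀ x : QuaternionGroup 2, x ^ 2 = 1 → x = 1 ∨ x = .a 2 := by decide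
  have ha2 : (QuaternionGroup.a 2 : QuaternionGroup 2) ≠ 1 := by decide
  have ha2sq : (QuaternionGroup.a 2 : QuaternionGroup 2) ^ 2 = 1 := by decide
  have horda2 : orderOf (QuaternionGroup.a 2 : QuaternionGroup 2) = 2 :=
    orderOf_eq_prime ha2sq ha2
  have hords : ∀ x : QuaternionGroup 2, x ≠ 1 → orderOf x = 2 ∨ orderOf x = 4 := by
    intro x hx
    rcases dvd_four (orderOf_dvd_of_pow_eq_one (h4 x)) with h | h | h
    · exact absurd (orderOf_eq_one_iff.mp h) hx
    · exact Or.inl h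
    · exact Or.inr h
  have hsq : ∀ x : QuaternionGroup 2, orderOf x = 4 → x ^ 2 = .a 2 := by
    intro x hx
    rcases h2 (x ^ 2) (by rw [← pow_mul]; exact h4 x) with h | h
    · exfalso
      have := orderOf_dvd_of_pow_eq_one h
      rw [hx] at this
      norm_num at this
    · exact h
  have mem24 : ∀ u v : QuaternionGroup 2, orderOf u = 2 → orderOf v = 4 → u ∈ zpowers v := by
    intro u v hu hv
    have hu2 : u ^ 2 = 1 := orderOf_dvd_iff_pow_eq_one.mp (by rw [hu])
    have hu1 : u ≠ 1 := fun h => by rw [h, orderOf_one] at hu; norm_num at hu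
    rcases h2 u hu2 with h | h
    · exact absurd h hu1
    · rw [h, ← hsq v hv]
      exact pow_mem (mem_zpowers v) 2
  refine ⟨⟨.a 2, by rw [horda2]; exact Nat.prime_two⟩, ⟨.xa 0, by decide, ?_⟩, ?_⟩
  · have : orderOf (QuaternionGroup.xa 0 : QuaternionGroup 2) = 4 :=
      QuaternionGroup.orderOf_xa 0
    rw [this]; norm_num
  · intro x y hx hy
    rcases hords x hx with h1 | h1 <;> rcases hords y hy with h2' | h2'
    · exact iff_of_false (fun h => h.2 (h1.trans h2'.symm)) (by simp [h1, h2'])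
    · exact iff_of_true ⟨Or.inl (mem24 x y h1 h2'), by rw [h1, h2']; norm_num⟩
        (by rw [h1, h2']; norm_num)
    · exact iff_of_true ⟨Or.inr (mem24 y x h2' h1), by rw [h1, h2']; norm_num⟩
        (by rw [h1, h2']; norm_num)
    · exact iff_of_false (fun h => h.2 (h1.trans h2'.symm)) (by simp [h1, h2'])

lemma key_of_mulEquiv {G H : Type*} [Group G] [Group H] (e : G ≃* H) (h : Key H) : Key G := by
  obtain ⟨⟨a, ha⟩, ⟨b, hb1, hb2⟩, H3⟩ := h
  have hord : ∀ x : G, orderOf (e x) = orderOf x := fun x =>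
    orderOf_injective e.toMonoidHom e.injective x
  have hmem : ∀ x y : G, x ∈ zpowers y ↔ e x ∈ zpowers (e y) := by
    intro x y
    constructor
    · intro hx
      obtain ⟨k, hk⟩ := mem_zpowers_iff.mp hx
      exact mem_zpowers_iff.mpr ⟨k, by rw [← map_zpow, hk]⟩
    · intro hx
      obtain ⟨k, hk⟩ := mem_zpowers_iff.mp hx
      exact mem_zpowers_iff.mpr ⟨k, e.injective (by rw [map_zpow, hk])⟩
  have hne : ∀ x : G, x ≠ 1 → e x ≠ 1 := by
    intro x hx h1
    exact hx (by rwa [MulEquiv.map_eq_one_iff] at h1)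
  refine ⟨⟨e.symm a, ?_⟩, ⟨e.symm b, ?_, ?_⟩, ?_⟩
  · have := hord (e.symm a); rw [e.apply_symm_apply] at this; exact this ▸ ha
  · intro h; apply hb1; rw [← e.apply_symm_apply b, h, map_one]
  · have := hord (e.symm b); rw [e.apply_symm_apply] at this; exact this ▸ hb2
  · intro x y hx hy
    have := H3 (e x) (e y) (hne x hx) (hne y hy)
    rwa [hord, hord, ← hmem x y, ← hmem y x] at this

lemma central_comm_pow {K : Type*} [Group K] (a b w : K) (hw : ∀ g : K, Commute w g)
    (hab : b * a = a * b * w) : ∀ n : ℕ, (a * b) ^ n = a ^ n * b ^ n * w ^ (n.choose 2) := by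
  have hwk : ∀ (k : ℕ) (g : K), w ^ k * g = g * w ^ k := fun k g => ((hw g).pow_left k).eq
  have haux : ∀ n : ℕ, b ^ n * a = a * b ^ n * w ^ n := by
    intro n
    induction n with
    | zero => simp
    | succ n ih =>
      calc b ^ (n + 1) * a = b * (b ^ n * a) := by rw [pow_succ']; group
        _ = b * (a * b ^ n * w ^ n) := by rw [ih]
        _ = (b * a) * (b ^ n * w ^ n) := by group
        _ = (a * b * w) * (b ^ n * w ^ n) := by rw [hab]
        _ = a * (b * (w * b ^ n)) * w ^ n := by group
        _ = a * (b * (b ^ n * w)) * w ^ n := by rw [(hw (b ^ n)).eq]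
        _ = a * b ^ (n + 1) * w ^ (n + 1) := by rw [pow_succ' b, pow_succ w]; group
  intro n
  induction n with
  | zero => simp
  | succ n ih =>
    have hchoose : (n + 1).choose 2 = n.choose 2 + n := by
      have h := Nat.choose_succ_succ n 1
      simp only [Nat.succ_eq_add_one, Nat.choose_one_right] at h
      norm_num at h
      omega
    calc (a * b) ^ (n + 1) = (a * b) ^ n * (a * b) := by rw [pow_succ]
      _ = (a ^ n * b ^ n * w ^ (n.choose 2)) * (a * b) := by rw [ih]
      _ = a ^ n * b ^ n * (w ^ (n.choose 2) * a) * b := by group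
      _ = a ^ n * b ^ n * (a * w ^ (n.choose 2)) * b := by rw [hwk]
      _ = a ^ n * (b ^ n * a) * (w ^ (n.choose 2) * b) := by group
      _ = a ^ n * (b ^ n * a) * (b * w ^ (n.choose 2)) := by rw [hwk]
      _ = a ^ n * (a * b ^ n * w ^ n) * (b * w ^ (n.choose 2)) := by rw [haux]
      _ = a ^ (n + 1) * (b ^ n * (w ^ n * b)) * w ^ (n.choose 2) := by rw [pow_succ' a]; group
      _ = a ^ (n + 1) * (b ^ n * (b * w ^ n)) * w ^ (n.choose 2) := by rw [hwk]
      _ = a ^ (n + 1) * b ^ (n + 1) * (w ^ (n.choose 2) * w ^ n) := by rw [pow_succ b]; group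
      _ = a ^ (n + 1) * b ^ (n + 1) * w ^ ((n + 1).choose 2) := by rw [hchoose, pow_add w]

def q8map {G : Type*} [Group G] (u v : G) : QuaternionGroup 2 → G
  | .a k => u ^ (k.val : ℤ)
  | .xa k => v * u ^ (k.val : ℤ)

@[simp] lemma q8map_a {G : Type*} [Group G] (u v : G) (k : ZMod (2 * 2)) :
    q8map u v (.a k) = u ^ (k.val : ℤ) := rfl
@[simp] lemma q8map_xa {G : Type*} [Group G] (u v : G) (k : ZMod (2 * 2)) :
    q8map u v (.xa k) = v * u ^ (k.val : ℤ) := rfl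

lemma q8_iso {G : Type*} [Group G] (u v : G) (hu4 : orderOf u = 4)
    (hvv : v * v = u * u) (hconj : v⁻¹ * u * v = u⁻¹) (hnc : u * v ≠ v * u)
    (hcover : ∀ g : G, g * u = u * g → g ∈ zpowers u)
    (hconj2 : ∀ g : G, g * u ≠ u * g → g⁻¹ * u * g = u⁻¹) :
    Nonempty (G ≃* QuaternionGroup 2) := by
  haveI : NeZero (2 * 2) := ⟨by norm_num⟩
  have ucast : ∀ k : ZMod (2 * 2), ((k.val : ℤ) : ZMod (2 * 2)) = k := by
    intro k
    push_cast
    exact ZMod.natCast_rightInverse k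
  have upow_eq : ∀ z w : ℤ, ((z : ZMod (2 * 2)) = (w : ZMod (2 * 2))) → u ^ z = u ^ w := by
    intro z w h
    have hdvd : ((2 * 2 : ℕ) : ℤ) ∣ w - z := (ZMod.intCast_eq_intCast_iff _ _ _).mp h |>.dvd
    have : u ^ (w - z) = 1 := by
      apply orderOf_dvd_iff_zpow_eq_one.mp
      rw [hu4]
      exact_mod_cast hdvd
    calc u ^ z = u ^ z * u ^ (w - z) := by rw [this, mul_one]
      _ = u ^ w := by rw [← zpow_add]; ring_nf
  have huvz : ∀ z : ℤ, v⁻¹ * u ^ z * v = u ^ (-z) := by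
    intro z
    have : v⁻¹ * u ^ z * v = (v⁻¹ * u * v⁻¹⁻¹) ^ z := by rw [conj_zpow, inv_inv]
    rw [this, inv_inv, hconj, inv_zpow, zpow_neg]
  have R1 : ∀ z : ℤ, u ^ z * v = v * u ^ (-z) := by
    intro z
    have := huvz z
    calc u ^ z * v = v * (v⁻¹ * u ^ z * v) := by group
      _ = v * u ^ (-z) := by rw [this]
  have hf : ∀ x y : QuaternionGroup 2, q8map u v (x * y) = q8map u v x * q8map u v y := by
    intro x y
    rcases x with k | k <;> rcases y with l | l
    · rw [QuaternionGroup.a_mul_a]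
      simp only [q8map_a]
      rw [← zpow_add]
      exact upow_eq _ _ (by push_cast [ucast]; ring)
    · rw [QuaternionGroup.a_mul_xa]
      simp only [q8map_a, q8map_xa]
      rw [← mul_assoc, R1 (k.val : ℤ), mul_assoc, ← zpow_add]
      exact congrArg (v * ·) (upow_eq _ _ (by push_cast [ucast]; ring))
    · rw [QuaternionGroup.xa_mul_a]
      simp only [q8map_a, q8map_xa]
      rw [mul_assoc, ← zpow_add]
      exact congrArg (v * ·) (upow_eq _ _ (by push_cast [ucast]; ring))
    · rw [QuaternionGroup.xa_mul_xa]
      simp only [q8map_a, q8map_xa]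
      have hv2 : v * v = u ^ (2 : ℤ) := by rw [hvv, zpow_two]
      have key : (v * u ^ ((k.val : ℤ))) * (v * u ^ ((l.val : ℤ))) =
          u ^ ((2 : ℤ) + -(k.val : ℤ) + (l.val : ℤ)) := by
        have h1 : (v * u ^ ((k.val : ℤ))) * (v * u ^ ((l.val : ℤ))) =
            v * (u ^ ((k.val : ℤ)) * v) * u ^ ((l.val : ℤ)) := by group
        rw [h1, R1, ← mul_assoc v v, hv2, ← zpow_add, ← zpow_add]
      rw [key]
      exact upow_eq _ _ (by push_cast [ucast]; ring)
  have inj_exp : ∀ k l : ZMod (2 * 2), u ^ (k.val : ℤ) = u ^ (l.val : ℤ) → k = l := by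
    intro k l h
    have h1 : u ^ ((l.val : ℤ) - (k.val : ℤ)) = 1 := by
      rw [zpow_sub, ← h, mul_inv_cancel]
    have h2 : (orderOf u : ℤ) ∣ (l.val : ℤ) - (k.val : ℤ) :=
      orderOf_dvd_iff_zpow_eq_one.mpr h1
    rw [hu4] at h2
    have : ((k.val : ℤ) : ZMod (2 * 2)) = ((l.val : ℤ) : ZMod (2 * 2)) := by
      rw [ZMod.intCast_eq_intCast_iff]
      exact (Int.modEq_iff_dvd.mpr (by exact_mod_cast h2))
    rwa [ucast, ucast] at this
  have hcomm : ∀ z : ℤ, u * u ^ z = u ^ z * u := fun z => (Commute.zpow_right (Commute.refl u) z).eq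
  have hinj : Function.Injective (q8map u v) := by
    intro x y h
    rcases x with k | k <;> rcases y with l | l
    · exact congrArg _ (inj_exp _ _ h)
    · exfalso
      simp only [q8map_a, q8map_xa] at h
      have : v = u ^ ((k.val : ℤ) - (l.val : ℤ)) := by
        rw [zpow_sub, h]; group
      apply hnc
      rw [this, ← hcomm]
    · exfalso
      simp only [q8map_a, q8map_xa] at h
      have : v = u ^ ((l.val : ℤ) - (k.val : ℤ)) := by
        rw [zpow_sub, ← h]; group
      apply hnc
      rw [this, ← hcomm]
    · simp only [q8map_xa, mul_right_inj] at h
      exact congrArg _ (inj_exp _ _ h)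
  have hsurj : Function.Surjective (q8map u v) := by
    intro g
    by_cases hg : g * u = u * g
    · obtain ⟨z, hz⟩ := mem_zpowers_iff.mp (hcover g hg)
      refine ⟨.a ((z : ZMod (2 * 2))), ?_⟩
      rw [q8map_a, upow_eq _ z (ucast _), hz]
    · have h1 : g⁻¹ * u * g = u⁻¹ := hconj2 g hg
      have e1 : v⁻¹ * u = u⁻¹ * v⁻¹ := by rw [← hconj]; group
      have e2 : g * u⁻¹ = u * g := by rw [← h1]; group
      have h2 : (g * v⁻¹) * u = u * (g * v⁻¹) := by
        calc (g * v⁻¹) * u = g * (v⁻¹ * u) := by group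
          _ = g * (u⁻¹ * v⁻¹) := by rw [e1]
          _ = (g * u⁻¹) * v⁻¹ := by group
          _ = u * (g * v⁻¹) := by rw [e2]; group
      obtain ⟨z, hz⟩ := mem_zpowers_iff.mp (hcover _ h2)
      refine ⟨.xa ((-z : ℤ) : ZMod (2 * 2)), ?_⟩
      rw [q8map_xa, upow_eq _ (-z) (ucast _)]
      calc v * u ^ (-z) = u ^ z * v := (R1 z).symm
        _ = (g * v⁻¹) * v := by rw [hz]
        _ = g := by group
  exact ⟨(MulEquiv.ofBijective (MonoidHom.mk' (q8map u v) hf) ⟨hinj, hsurj⟩).symm⟩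

theorem key_classification {G : Type*} [Group G] [Fintype G] (hK : Key G) :
    (∃ p : ℕ, p.Prime ∧ Nonempty (G ≃* Multiplicative (ZMod (p ^ 2)))) ∨
    (∃ p q : ℕ, p.Prime ∧ q.Prime ∧ p ≠ q ∧
       Nonempty (G ≃* Multiplicative (ZMod (p * q)))) ∨
    Nonempty (G ≃* QuaternionGroup 2) := by
  obtain ⟨⟨a0, ha0⟩, ⟨b, hb1, hbnp⟩, H3⟩ := hK
  have stepA : ∀ x y : G, (orderOf x).Prime → y ≠ 1 → ¬(orderOf y).Prime →
      x ∈ zpowers y ∧ orderOf x ≠ orderOf y := by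
    intro x y hx hy1 hynp
    have hx1 : x ≠ 1 := fun h => hx.ne_one (by rw [h, orderOf_one])
    obtain ⟨hmem, hne⟩ := (H3 x y hx1 hy1).mpr (by simp [hx, hynp])
    rcases hmem with h | h
    · exact ⟨h, hne⟩
    · exfalso
      have hdvd := orderOf_dvd_of_mem_zpowers h
      rcases Nat.Prime.eq_one_or_self_of_dvd hx _ hdvd with h1 | h1
      · exact hy1 (orderOf_eq_one_iff.mp h1)
      · exact hynp (h1 ▸ hx)
  have stepC : ∀ x : G, x ≠ 1 → ¬(orderOf x).Prime →
      ∃ r s : ℕ, r.Prime ∧ s.Prime ∧ orderOf x = r * s := by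
    intro x hx1 hxnp
    have hn1 : orderOf x ≠ 1 := fun h => hx1 (orderOf_eq_one_iff.mp h)
    have hn0 : orderOf x ≠ 0 := (orderOf_pos x).ne'
    have hr : (orderOf x).minFac.Prime := Nat.minFac_prime hn1
    have hnm : (orderOf x).minFac * (orderOf x / (orderOf x).minFac) = orderOf x :=
      Nat.mul_div_cancel' (orderOf x).minFac_dvd
    set m := orderOf x / (orderOf x).minFac with hmdef
    have hm1 : m ≠ 1 := by
      intro h
      rw [h, mul_one] at hnm
      exact hxnp (hnm ▸ hr)
    by_cases hmp : m.Prime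
    · exact ⟨(orderOf x).minFac, m, hr, hmp, hnm.symm⟩
    · exfalso
      have hordy : orderOf (x ^ (orderOf x).minFac) = m := by
        rw [orderOf_pow, Nat.gcd_eq_right (orderOf x).minFac_dvd]
      have hy1 : x ^ (orderOf x).minFac ≠ 1 := by
        intro h
        rw [h, orderOf_one] at hordy
        exact hm1 hordy.symm
      have hmn : m ≠ orderOf x := by
        intro h
        rw [h] at hnm
        have hm0 : orderOf x ≠ 0 := hn0
        nlinarith [hr.two_le, Nat.pos_of_ne_zero hm0]
      have := (H3 (x ^ (orderOf x).minFac) x hy1 hx1).mp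
        ⟨Or.inl (pow_mem (mem_zpowers x) _), by rw [hordy]; exact hmn⟩
      rw [hordy] at this
      exact this (iff_of_false hmp hxnp)
  obtain ⟨p, q, hp, hq, hbpq⟩ := stepC b hb1 hbnp
  haveI : Fact p.Prime := ⟨hp⟩
  by_cases hpq : p = q
  case neg =>
    -- distinct primes : G ≅ Z_{pq}
    have hcop : Nat.Coprime p q := (Nat.coprime_primes hp hq).mpr hpq
    have hordbq : orderOf (b ^ q) = p := by
      rw [orderOf_pow, hbpq, Nat.gcd_eq_right (dvd_mul_left q p), Nat.mul_div_cancel _ hq.pos]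
    have hordbp : orderOf (b ^ p) = q := by
      rw [orderOf_pow, hbpq, Nat.gcd_eq_right (dvd_mul_right p q),
        Nat.mul_div_cancel_left _ hp.pos]
    have hall : ∀ x : G, x ∈ zpowers b := by
      intro x
      by_cases hx1 : x = 1
      · rw [hx1]; exact one_mem _
      by_cases hxp : (orderOf x).Prime
      · exact (stepA x b hxp hb1 hbnp).1
      · obtain ⟨r, s, hr, hs, hxrs⟩ := stepC x hx1 hxp
        have h1 : b ^ q ∈ zpowers x := (stepA (b ^ q) x (by rw [hordbq]; exact hp) hx1 hxp).1
        have h2 : b ^ p ∈ zpowers x := (stepA (b ^ p) x (by rw [hordbp]; exact hq) hx1 hxp).1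
        have hpdvd : p ∣ orderOf x := by
          rw [← hordbq]; exact orderOf_dvd_of_mem_zpowers h1
        have hqdvd : q ∣ orderOf x := by
          rw [← hordbp]; exact orderOf_dvd_of_mem_zpowers h2
        have hordx : orderOf x = p * q := by
          have hpdvd' : p ∣ r * s := hxrs ▸ hpdvd
          have hqdvd' : q ∣ r * s := hxrs ▸ hqdvd
          have hpr : p = r ∨ p = s := by
            rcases (Nat.Prime.dvd_mul hp).mp hpdvd' with h | h
            · exact Or.inl ((Nat.prime_dvd_prime_iff_eq hp hr).mp h)
            · exact Or.inr ((Nat.prime_dvd_prime_iff_eq hp hs).mp h)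
          have hqr : q = r ∨ q = s := by
            rcases (Nat.Prime.dvd_mul hq).mp hqdvd' with h | h
            · exact Or.inl ((Nat.prime_dvd_prime_iff_eq hq hr).mp h)
            · exact Or.inr ((Nat.prime_dvd_prime_iff_eq hq hs).mp h)
          rw [hxrs]
          rcases hpr with h1' | h1' <;> rcases hqr with h2' | h2'
          · exact absurd (h1'.trans h2'.symm) hpq
          · rw [← h1', ← h2']
          · rw [← h1', ← h2']; exact mul_comm q p
          · exact absurd (h1'.trans h2'.symm) hpq
        have hble : zpowers b ≤ zpowers x := by
          rw [zpowers_le]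
          obtain ⟨u, t, hut⟩ := (Nat.isCoprime_iff_coprime.mpr hcop)
          have hb' : b = (b ^ p) ^ u * (b ^ q) ^ t := by
            have h0 : b = b ^ (u * (p : ℤ) + t * (q : ℤ)) := by rw [hut, zpow_one]
            conv_lhs => rw [h0]
            rw [zpow_add, mul_comm u ((p:ℕ):ℤ), mul_comm t ((q:ℕ):ℤ), zpow_mul, zpow_mul,
              zpow_natCast, zpow_natCast]
          rw [hb']
          exact mul_mem (zpow_mem h2 u) (zpow_mem h1 t)
        have heq : zpowers b = zpowers x := by
          apply Subgroup.eq_of_le_of_card_ge hble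
          rw [Nat.card_zpowers, Nat.card_zpowers, hordx, hbpq]
        rw [heq]
        exact mem_zpowers x
    have hcyc : IsCyclic G := ⟨⟨b, hall⟩⟩
    have hcard : Nat.card G = p * q := by
      rw [← orderOf_eq_card_of_forall_mem_zpowers hall, hbpq]
    exact Or.inr (Or.inl ⟨p, q, hp, hq, hpq, hcard ▸ ⟨(zmodCyclicMulEquiv hcyc).symm⟩⟩)
  case pos =>
    subst hpq
    -- orderOf b = p * p
    have hppnp : ¬ (p * p).Prime := not_prime_mul'' hp hp
    have hpp1 : p * p ≠ 1 := by nlinarith [hp.two_le]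
    have hprime_ord : ∀ x : G, (orderOf x).Prime → orderOf x = p := by
      intro x hx
      have hmem := (stepA x b hx hb1 hbnp).1
      have hdvd : orderOf x ∣ p * p := by
        rw [← hbpq]; exact orderOf_dvd_of_mem_zpowers hmem
      have : orderOf x ∣ p := by
        have : orderOf x ∣ p ^ 2 := by rw [sq]; exact hdvd
        exact (Nat.Prime.dvd_of_dvd_pow hx this : orderOf x ∣ p)
      exact (Nat.prime_dvd_prime_iff_eq hx hp).mp this
    have hpowp : ∀ x : G, orderOf x = p * p → orderOf (x ^ p) = p := by
      intro x hx
      rw [orderOf_pow, hx, Nat.gcd_eq_right (dvd_mul_left p p), Nat.mul_div_cancel _ hp.pos]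
    have horder : ∀ x : G, orderOf x = 1 ∨ orderOf x = p ∨ orderOf x = p * p := by
      intro x
      by_cases hx1 : x = 1
      · left; rw [hx1, orderOf_one]
      by_cases hxp : (orderOf x).Prime
      · right; left; exact hprime_ord x hxp
      · right; right
        obtain ⟨r, s, hr, hs, hxrs⟩ := stepC x hx1 hxp
        have hrp : r = p := by
          have h1 : orderOf (x ^ s) = r := by
            rw [orderOf_pow, hxrs, Nat.gcd_eq_right (dvd_mul_left s r),
              Nat.mul_div_cancel _ hs.pos]
          have := hprime_ord (x ^ s) (by rw [h1]; exact hr)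
          rw [h1] at this; exact this
        have hsp : s = p := by
          have h1 : orderOf (x ^ r) = s := by
            rw [orderOf_pow, hxrs, Nat.gcd_eq_right (dvd_mul_right r s),
              Nat.mul_div_cancel_left _ hr.pos]
          have := hprime_ord (x ^ r) (by rw [h1]; exact hs)
          rw [h1] at this; exact this
        rw [hxrs, hrp, hsp]
    set c : G := b ^ p with hcdef
    have hordc : orderOf c = p := hpowp b hbpq
    have hmem_pow : ∀ y : G, orderOf y = p * p → ∀ x : G, orderOf x = p → x ∈ zpowers (y ^ p) := by
      intro y hy x hx
      have hy1 : y ≠ 1 := fun h => hpp1 (by rw [← hy, h, orderOf_one])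
      have hynp : ¬ (orderOf y).Prime := by rw [hy]; exact hppnp
      have hxy : x ∈ zpowers y := (stepA x y (by rw [hx]; exact hp) hy1 hynp).1
      obtain ⟨m, hm⟩ := mem_zpowers_iff.mp hxy
      have hxp1 : y ^ (m * (p : ℤ)) = 1 := by
        rw [zpow_mul, hm, zpow_natCast, ← hx, pow_orderOf_eq_one]
      have hdv : ((p * p : ℕ) : ℤ) ∣ m * (p : ℤ) := by
        rw [← hy]
        exact orderOf_dvd_iff_zpow_eq_one.mpr hxp1
      obtain ⟨k, hk⟩ := hdv
      have hp0 : (p : ℤ) ≠ 0 := by exact_mod_cast hp.pos.ne'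
      have hmk : m = (p : ℤ) * k := by
        apply mul_right_cancel₀ hp0
        rw [hk]; push_cast; ring
      refine mem_zpowers_iff.mpr ⟨k, ?_⟩
      rw [← zpow_natCast y p, ← zpow_mul, ← hmk, hm]
    have hZmem : ∀ x : G, orderOf x = p → x ∈ zpowers c := hmem_pow b hbpq
    have hxpZ : ∀ x : G, x ^ p ∈ zpowers c := by
      intro x
      rcases horder x with h | h | h
      · rw [orderOf_eq_one_iff.mp h, one_pow]; exact one_mem _
      · exact pow_mem (hZmem x h) p
      · exact hZmem _ (hpowp x h)
    -- c is central
    have hcentral : ∀ g : G, g * c = c * g := by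
      intro g
      have hconj_ord : orderOf (g * c * g⁻¹) = p := by
        have h1 := orderOf_injective (MulAut.conj g).toMonoidHom (MulAut.conj g).injective c
        simp only [MulEquiv.coe_toMonoidHom, MulAut.conj_apply] at h1
        rw [h1, hordc]
      obtain ⟨m, hm⟩ := mem_zpowers_iff.mp (hZmem _ hconj_ord)
      have iter : ∀ k : ℕ, g ^ k * c * (g ^ k)⁻¹ = c ^ (m ^ k) := by
        intro k
        induction k with
        | zero => simp
        | succ k ih =>
          have h1 : g ^ (k + 1) * c * (g ^ (k + 1))⁻¹ = g * (g ^ k * c * (g ^ k)⁻¹) * g⁻¹ := by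
            rw [pow_succ']; group
          rw [h1, ih, ← conj_zpow, ← hm, ← zpow_mul, ← pow_succ']
      have hend : c ^ (m ^ orderOf g) = c := by
        have h2 := iter (orderOf g)
        rw [pow_orderOf_eq_one] at h2
        simpa using h2.symm
      have hdvd : (p : ℤ) ∣ m ^ orderOf g - 1 := by
        have h1 : c ^ (m ^ orderOf g - 1) = 1 := by
          rw [zpow_sub, hend, zpow_one, mul_inv_cancel]
        have h2 := orderOf_dvd_iff_zpow_eq_one.mpr h1
        rwa [hordc] at h2
      obtain ⟨k, hk⟩ : ∃ k : ℕ, orderOf g = p ^ k := by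
        rcases horder g with h | h | h
        · exact ⟨0, by rw [h, pow_zero]⟩
        · exact ⟨1, by rw [h, pow_one]⟩
        · exact ⟨2, by rw [h, sq]⟩
      have hfermat : ∀ j : ℕ, (m : ZMod p) ^ p ^ j = (m : ZMod p) := by
        intro j
        induction j with
        | zero => rw [pow_zero, pow_one]
        | succ j ih => rw [pow_succ, pow_mul, ih, ZMod.pow_card]
      have hm1 : (p : ℤ) ∣ m - 1 := by
        rw [← ZMod.intCast_zmod_eq_zero_iff_dvd]
        push_cast
        have h1 : ((m ^ orderOf g - 1 : ℤ) : ZMod p) = 0 :=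
          (ZMod.intCast_zmod_eq_zero_iff_dvd _ _).mpr hdvd
        push_cast at h1
        rw [hk, hfermat k] at h1
        exact h1
      have hcm : c ^ m = c := by
        have h2 : c ^ (m - 1) = 1 := by
          apply orderOf_dvd_iff_zpow_eq_one.mp
          rw [hordc]; exact hm1
        calc c ^ m = c ^ ((1 : ℤ) + (m - 1)) := congrArg (fun z : ℤ => c ^ z) (by ring)
          _ = c ^ (1 : ℤ) * c ^ (m - 1) := zpow_add c 1 (m - 1)
          _ = c := by rw [h2, zpow_one, mul_one]
      have hfix : g * c * g⁻¹ = c := by rw [← hm, hcm]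
      calc g * c = (g * c * g⁻¹) * g := by group
        _ = c * g := by rw [hfix]
    have hpG : IsPGroup p G := by
      intro g
      refine ⟨2, orderOf_dvd_iff_pow_eq_one.mp ?_⟩
      rcases horder g with h | h | h <;> rw [h]
      · exact one_dvd _
      · exact dvd_pow_self p (by norm_num)
      · rw [sq]
    obtain ⟨n, hn⟩ := IsPGroup.iff_card.mp hpG
    have hp2dvd : p * p ∣ Nat.card G := by rw [← hbpq]; exact orderOf_dvd_natCard b
    have hn2 : 2 ≤ n := by
      by_contra hcon
      push_neg at hcon
      have hcardle : Nat.card G ≤ p := by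
        interval_cases n
        · rw [hn, pow_zero]; exact hp.pos
        · rw [hn, pow_one]
      have hle := Nat.le_of_dvd Nat.card_pos hp2dvd
      nlinarith [hp.two_le]
    by_cases hn2' : n = 2
    · have hcard2 : Nat.card G = p ^ 2 := by rw [hn, hn2']
      have htop : zpowers b = ⊤ := by
        apply Subgroup.eq_top_of_card_eq
        rw [Nat.card_zpowers, hbpq, hcard2, sq]
      have hcyc : IsCyclic G := ⟨⟨b, fun x => (by rw [htop]; trivial : x ∈ zpowers b)⟩⟩
      exact Or.inl ⟨p, hp, hcard2 ▸ ⟨(zmodCyclicMulEquiv hcyc).symm⟩⟩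
    · have hn3 : 3 ≤ n := by omega
      by_cases hp2 : p = 2
      · subst hp2
        -- p = 2 : quaternion group or contradiction
        have hc1 : c ≠ 1 := fun h => by rw [h, orderOf_one] at hordc; norm_num at hordc
        have hcc : c * c = 1 := by
          have h0 : c ^ 2 = 1 := orderOf_dvd_iff_pow_eq_one.mp (by rw [hordc])
          rw [pow_two] at h0; exact h0
        have hmemc : ∀ x : G, x ∈ zpowers c → x = 1 ∨ x = c := by
          intro x hx
          obtain ⟨k, hk⟩ := mem_zpowers_iff.mp hx
          have hc2 : c ^ (2 : ℤ) = 1 := by rw [zpow_two]; exact hcc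
          rcases Int.even_or_odd k with ⟨t, ht⟩ | ⟨t, ht⟩
          · left
            rw [← hk, show k = 2 * t by omega, zpow_mul, hc2, one_zpow]
          · right
            rw [← hk, show k = 2 * t + 1 by omega, zpow_add, zpow_mul, hc2, one_zpow,
              zpow_one, one_mul]
        have hord4 : ∀ x : G, x ≠ 1 → x ∉ zpowers c → orderOf x = 2 * 2 ∧ x * x = c := by
          intro x hx1 hxZ
          rcases horder x with h | h | h
          · exact absurd (orderOf_eq_one_iff.mp h) hx1
          · exact absurd (hZmem x h) hxZ
          · refine ⟨h, ?_⟩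
            have h2 : orderOf (x * x) = 2 := by
              rw [← pow_two, orderOf_pow, h]
              decide
            rcases hmemc _ (hZmem _ h2) with h3 | h3
            · rw [h3, orderOf_one] at h2; norm_num at h2
            · exact h3
        haveI hnorm : (zpowers c).Normal := by
          constructor
          intro z hz g
          obtain ⟨k, hk⟩ := mem_zpowers_iff.mp hz
          have hzg : g * z = z * g := by
            rw [← hk]
            exact (Commute.zpow_right (show Commute g c from hcentral g) k).eq
          have h5 : g * z * g⁻¹ = z := by rw [hzg]; group
          rw [h5]; exact hz
        have hcomm2 : ∀ u v : G, u⁻¹ * v⁻¹ * u * v ∈ zpowers c := by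
          intro u v
          rw [← QuotientGroup.eq_one_iff]
          simp only [QuotientGroup.mk_mul, QuotientGroup.mk_inv]
          have hsqQ : ∀ t : G ⧸ zpowers c, t * t = 1 := by
            intro t
            refine QuotientGroup.induction_on t ?_
            intro g
            rw [← QuotientGroup.mk_mul, QuotientGroup.eq_one_iff, ← pow_two]
            exact hxpZ g
          have hcm : ∀ s t : G ⧸ zpowers c, s * t = t * s := by
            intro s t
            have hinv : ∀ r : G ⧸ zpowers c, r⁻¹ = r :=
              fun r => inv_eq_of_mul_eq_one_right (hsqQ r)
            calc s * t = (s * t)⁻¹ := (hinv _).symm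
              _ = t⁻¹ * s⁻¹ := mul_inv_rev s t
              _ = t * s := by rw [hinv, hinv]
          have h := hcm ((u : G ⧸ zpowers c)) ((v : G ⧸ zpowers c))
          calc (u : G ⧸ zpowers c)⁻¹ * (v : G ⧸ zpowers c)⁻¹ * u * v
              = (u : G ⧸ zpowers c)⁻¹ * ((v : G ⧸ zpowers c)⁻¹ *
                  ((u : G ⧸ zpowers c) * v)) := by group
            _ = (u : G ⧸ zpowers c)⁻¹ * ((v : G ⧸ zpowers c)⁻¹ *
                  ((v : G ⧸ zpowers c) * u)) := by rw [h]
            _ = 1 := by group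
        by_cases habel : ∀ u v : G, u * v = v * u
        · exfalso
          have hmapmul2 : ∀ u v : G, (u * v) * (u * v) = (u * u) * (v * v) := by
            intro u v
            calc (u * v) * (u * v) = u * (v * u) * v := by group
              _ = u * (u * v) * v := by rw [habel v u]
              _ = (u * u) * (v * v) := by group
          set ψ : G →* G := MonoidHom.mk' (fun x : G => x * x) hmapmul2 with hψdef
          have hker_le : ∀ k : G, k ∈ ψ.ker → k ∈ zpowers c := by
            intro k hk
            have hk1 : k * k = 1 := hk
            have hk2 : k ^ 2 = 1 := by rw [pow_two]; exact hk1
            rcases Nat.Prime.eq_one_or_self_of_dvd Nat.prime_two _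
              (orderOf_dvd_of_pow_eq_one hk2) with h | h
            · rw [orderOf_eq_one_iff.mp h]; exact one_mem _
            · exact hZmem _ h
          have hcard_ker : Nat.card ψ.ker ≤ 2 := by
            have hinj : Function.Injective
                (fun k : ψ.ker => (⟨(k : G), hker_le k k.2⟩ : zpowers c)) := by
              intro k1 k2 h
              simp only [Subtype.mk.injEq] at h
              exact Subtype.ext h
            calc Nat.card ψ.ker ≤ Nat.card (zpowers c) :=
                Nat.card_le_card_of_injective _ hinj
              _ = 2 := by rw [Nat.card_zpowers, hordc]
          have hcard_range : Nat.card ψ.range ≤ 2 := by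
            have hle : ∀ r : G, r ∈ ψ.range → r ∈ zpowers c := by
              rintro r ⟨h, rfl⟩
              have : (h : G) * h = h ^ 2 := by rw [pow_two]
              show ψ h ∈ zpowers c
              have hψh : ψ h = h * h := rfl
              rw [hψh, this]
              exact hxpZ h
            have hinj : Function.Injective
                (fun r : ψ.range => (⟨(r : G), hle r r.2⟩ : zpowers c)) := by
              intro r1 r2 h
              simp only [Subtype.mk.injEq] at h
              exact Subtype.ext h
            calc Nat.card ψ.range ≤ Nat.card (zpowers c) :=
                Nat.card_le_card_of_injective _ hinj
              _ = 2 := by rw [Nat.card_zpowers, hordc]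
          have hiso : Nat.card (G ⧸ ψ.ker) = Nat.card ψ.range :=
            Nat.card_congr (QuotientGroup.quotientKerEquivRange ψ).toEquiv
          have hcardle : Nat.card G ≤ 2 * 2 := by
            calc Nat.card G = Nat.card (G ⧸ ψ.ker) * Nat.card ψ.ker :=
                Subgroup.card_eq_card_quotient_mul_card_subgroup ψ.ker
              _ = Nat.card ψ.range * Nat.card ψ.ker := by rw [hiso]
              _ ≤ 2 * 2 := Nat.mul_le_mul hcard_range hcard_ker
          rw [hn] at hcardle
          have h8 : 2 ^ 3 ≤ 2 ^ n := Nat.pow_le_pow_right (by norm_num) hn3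
          omega
        · push_neg at habel
          obtain ⟨u, v, huv⟩ := habel
          have hnotZ : ∀ x : G, x ∈ zpowers c → ∀ y : G, x * y = y * x := by
            intro x hx y
            obtain ⟨k, hk⟩ := mem_zpowers_iff.mp hx
            rw [← hk]
            exact (Commute.zpow_left (show Commute c y from (hcentral y).symm) k).eq
          have hu1 : u ≠ 1 := fun h => huv (by rw [h, one_mul, mul_one])
          have hv1 : v ≠ 1 := fun h => huv (by rw [h, one_mul, mul_one])
          have huZ : u ∉ zpowers c := fun h => huv (hnotZ u h v)
          have hvZ : v ∉ zpowers c := fun h => huv ((hnotZ v h u).symm)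
          obtain ⟨hu4, huu⟩ := hord4 u hu1 huZ
          obtain ⟨hv4, hvv⟩ := hord4 v hv1 hvZ
          have hu4' : u ^ (4 : ℕ) = 1 := by
            apply orderOf_dvd_iff_pow_eq_one.mp
            rw [hu4]
          have hcommuv : ∀ y : G, u * y ≠ y * u → y⁻¹ * u * y = u⁻¹ := by
            intro y hxy
            rcases hmemc _ (hcomm2 u y) with h | h
            · exfalso
              apply hxy
              have h2 : (y * u) * (u⁻¹ * y⁻¹ * u * y) = (y * u) * 1 := by rw [h]
              rw [mul_one] at h2
              rw [← h2]; group
            · have h2 : y⁻¹ * u * y = u * c := by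
                have h3 : u * (u⁻¹ * y⁻¹ * u * y) = u * c := by rw [h]
                rw [← h3]; group
              rw [h2, ← huu]
              have h4 : u * (u * u) = u ^ 3 := by
                rw [pow_succ, pow_two]; group
              rw [h4]
              have h5 : u * u ^ 3 = 1 := by
                rw [← pow_succ']
                exact hu4'
              exact (inv_eq_of_mul_eq_one_right h5).symm
          have hconj := hcommuv v huv
          have hcov : ∀ g : G, g * u = u * g → g ∈ zpowers u := by
            intro g hg
            by_cases hgZ : g ∈ zpowers c
            · rcases hmemc g hgZ with h | h
              · rw [h]; exact one_mem _
              · rw [h, ← huu]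
                exact mul_mem (mem_zpowers u) (mem_zpowers u)
            · obtain ⟨hg4, hgg⟩ := hord4 g (fun h => hgZ (h ▸ one_mem _)) hgZ
              by_cases hguZ : g * u ∈ zpowers c
              · rcases hmemc _ hguZ with h | h
                · rw [eq_inv_of_mul_eq_one_left h]
                  exact inv_mem (mem_zpowers u)
                · have hgc : g = c * u⁻¹ := by
                    rw [← h]; group
                  have hcu : c * u⁻¹ = u := by rw [← huu]; group
                  rw [hgc, hcu]
                  exact mem_zpowers u
              · exfalso
                obtain ⟨-, hgugu⟩ := hord4 (g * u) (fun h => hguZ (h ▸ one_mem _)) hguZ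
                have h1 : (g * u) * (g * u) = (g * g) * (u * u) := by
                  calc (g * u) * (g * u) = g * (u * g) * u := by group
                    _ = g * (g * u) * u := by rw [← hg]
                    _ = (g * g) * (u * u) := by group
                have : c = 1 := by rw [← hgugu, h1, hgg, huu, hcc]
                exact hc1 this
          have hconj2 : ∀ g : G, g * u ≠ u * g → g⁻¹ * u * g = u⁻¹ :=
            fun g hg => hcommuv g (fun h => hg h.symm)
          have hvvuu : v * v = u * u := by rw [hvv, huu]
          have hu4'' : orderOf u = 4 := by rw [hu4]
          obtain ⟨e⟩ := q8_iso u v hu4'' hvvuu hconj huv hcov hconj2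
          exact Or.inr (Or.inr ⟨e⟩)
      · -- p odd : contradiction via a subgroup of order p^3
        exfalso
        have h3dvd : p ^ 3 ∣ Nat.card G := by rw [hn]; exact pow_dvd_pow p hn3
        obtain ⟨H, hH⟩ := Sylow.exists_subgroup_card_pow_prime p h3dvd
        have hcH : c ∈ H := by
          haveI : Nontrivial H := Finite.one_lt_card_iff_nontrivial.mp
            (by rw [hH]; exact Nat.one_lt_pow (by norm_num) hp.one_lt)
          obtain ⟨x, hx1⟩ := exists_ne (1 : H)
          have hx1' : (x : G) ≠ 1 := by
            intro h
            exact hx1 (Subtype.ext h)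
          have hex : ∃ h0 : G, h0 ∈ H ∧ orderOf h0 = p := by
            rcases horder (x : G) with h | h | h
            · exact absurd (orderOf_eq_one_iff.mp h) hx1'
            · exact ⟨x, x.2, h⟩
            · exact ⟨(x : G) ^ p, pow_mem x.2 p, hpowp _ h⟩
          obtain ⟨h0, hh0H, hh0p⟩ := hex
          have h1 : h0 ∈ zpowers c := hZmem h0 hh0p
          have h2 : zpowers h0 = zpowers c := by
            apply Subgroup.eq_of_le_of_card_ge (zpowers_le.mpr h1)
            rw [Nat.card_zpowers, Nat.card_zpowers, hh0p, hordc]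
          have h3 : c ∈ zpowers h0 := by rw [h2]; exact mem_zpowers c
          exact (zpowers_le.mpr hh0H) h3
        set cH : H := ⟨c, hcH⟩ with hcHdef
        have hordcH : orderOf cH = p := by rw [Subgroup.orderOf_mk]; exact hordc
        have hcenH : ∀ w : H, w * cH = cH * w := by
          intro w
          apply Subtype.ext
          exact hcentral (w : G)
        haveI hZHnorm : (zpowers cH).Normal := by
          constructor
          intro z hz g
          obtain ⟨k, hk⟩ := mem_zpowers_iff.mp hz
          have hzg : g * z = z * g := by
            rw [← hk]
            exact (Commute.zpow_right (show Commute g cH from hcenH g) k).eq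
          have h5 : g * z * g⁻¹ = z := by rw [hzg]; group
          rw [h5]; exact hz
        have hcardZH : Nat.card (zpowers cH) = p := by rw [Nat.card_zpowers, hordcH]
        have hcardQ : Nat.card (H ⧸ zpowers cH) = p ^ 2 := by
          have he := Subgroup.card_eq_card_quotient_mul_card_subgroup (zpowers cH)
          rw [hH, hcardZH] at he
          apply Nat.eq_of_mul_eq_mul_right hp.pos
          rw [← he]; ring
        have hQcomm := IsPGroup.commutative_of_card_eq_prime_sq hcardQ
        have hcommH : ∀ u v : H, u⁻¹ * v⁻¹ * u * v ∈ zpowers cH := by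
          intro u v
          rw [← QuotientGroup.eq_one_iff]
          simp only [QuotientGroup.mk_mul, QuotientGroup.mk_inv]
          have h := hQcomm ((u : H ⧸ zpowers cH)) ((v : H ⧸ zpowers cH))
          calc (u : H ⧸ zpowers cH)⁻¹ * (v : H ⧸ zpowers cH)⁻¹ * u * v
              = (u : H ⧸ zpowers cH)⁻¹ * ((v : H ⧸ zpowers cH)⁻¹ *
                  ((u : H ⧸ zpowers cH) * v)) := by group
            _ = (u : H ⧸ zpowers cH)⁻¹ * ((v : H ⧸ zpowers cH)⁻¹ *
                  ((v : H ⧸ zpowers cH) * u)) := by rw [h]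
            _ = 1 := by group
        have hmapmul : ∀ u v : H, ((u * v : H) : G) ^ p = (u : G) ^ p * (v : G) ^ p := by
          intro u v
          have hwmem : ((v⁻¹ * u⁻¹ * v * u : H) : G) ∈ zpowers c := by
            obtain ⟨k, hk⟩ := mem_zpowers_iff.mp (hcommH v u)
            refine mem_zpowers_iff.mpr ⟨k, ?_⟩
            rw [← hk]
            push_cast
            rfl
          have hwcen : ∀ g : G, Commute ((v⁻¹ * u⁻¹ * v * u : H) : G) g := by
            intro g
            obtain ⟨k, hk⟩ := mem_zpowers_iff.mp hwmem
            rw [← hk]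
            exact Commute.zpow_left (show Commute c g from (hcentral g).symm) k
          have hab : (v : G) * u = (u : G) * v * ((v⁻¹ * u⁻¹ * v * u : H) : G) := by
            push_cast
            group
          have hform := central_comm_pow (u : G) (v : G) _ hwcen hab p
          have hwp : ((v⁻¹ * u⁻¹ * v * u : H) : G) ^ (p.choose 2) = 1 := by
            have hdvd1 : orderOf ((v⁻¹ * u⁻¹ * v * u : H) : G) ∣ p := by
              rw [← hordc]; exact orderOf_dvd_of_mem_zpowers hwmem
            have hdvd2 : p ∣ p.choose 2 :=
              hp.dvd_choose_self (by norm_num) (by have := hp.two_le; omega)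
            exact orderOf_dvd_iff_pow_eq_one.mp (hdvd1.trans hdvd2)
          rw [hwp, mul_one] at hform
          push_cast
          exact hform
        set ψ : H →* G := MonoidHom.mk' (fun h : H => ((h : G)) ^ p) hmapmul with hψdef
        have hker_le : ∀ k : H, k ∈ ψ.ker → (k : G) ∈ zpowers c := by
          intro k hk
          have hk1 : ((k : G)) ^ p = 1 := hk
          rcases Nat.Prime.eq_one_or_self_of_dvd hp _ (orderOf_dvd_of_pow_eq_one hk1)
            with h | h
          · rw [orderOf_eq_one_iff.mp h]; exact one_mem _
          · exact hZmem _ h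
        have hcard_ker : Nat.card ψ.ker ≤ p := by
          have hinj : Function.Injective
              (fun k : ψ.ker => (⟨((k : H) : G), hker_le k k.2⟩ : zpowers c)) := by
            intro k1 k2 h
            simp only [Subtype.mk.injEq] at h
            exact Subtype.ext (Subtype.ext h)
          calc Nat.card ψ.ker ≤ Nat.card (zpowers c) :=
              Nat.card_le_card_of_injective _ hinj
            _ = p := by rw [Nat.card_zpowers, hordc]
        have hcard_range : Nat.card ψ.range ≤ p := by
          have hle : ∀ r : G, r ∈ ψ.range → r ∈ zpowers c := by
            rintro r ⟨h, rfl⟩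
            exact hxpZ (h : G)
          have hinj : Function.Injective
              (fun r : ψ.range => (⟨(r : G), hle r r.2⟩ : zpowers c)) := by
            intro r1 r2 h
            simp only [Subtype.mk.injEq] at h
            exact Subtype.ext h
          calc Nat.card ψ.range ≤ Nat.card (zpowers c) :=
              Nat.card_le_card_of_injective _ hinj
            _ = p := by rw [Nat.card_zpowers, hordc]
        have hiso : Nat.card (H ⧸ ψ.ker) = Nat.card ψ.range :=
          Nat.card_congr (QuotientGroup.quotientKerEquivRange ψ).toEquiv
        have hfin : p ^ 3 ≤ p * p := by
          calc p ^ 3 = Nat.card H := hH.symm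
            _ = Nat.card (H ⧸ ψ.ker) * Nat.card ψ.ker :=
                Subgroup.card_eq_card_quotient_mul_card_subgroup ψ.ker
            _ = Nat.card ψ.range * Nat.card ψ.ker := by rw [hiso]
            _ ≤ p * p := Nat.mul_le_mul hcard_range hcard_ker
        nlinarith [hp.two_le]

/-- RP*(G) is complete bipartite iff G ≅ ℤ_{p²}, ℤ_{pq} or Q₈. -/
theorem stmt4 {G : Type*} [Group G] [Fintype G] :
    IsCompleteKPartite (properRedPowGraph G) 2 ↔
      ((∃ p : ℕ, p.Prime ∧ Nonempty (G ≃* Multiplicative (ZMod (p ^ 2)))) ∨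
       (∃ p q : ℕ, p.Prime ∧ q.Prime ∧ p ≠ q ∧
          Nonempty (G ≃* Multiplicative (ZMod (p * q)))) ∨
       Nonempty (G ≃* QuaternionGroup 2)) := by
  rw [isCompleteBipartite_iff_key]
  constructor
  · exact key_classification
  · rintro (⟨p, hp, ⟨e⟩⟩ | ⟨p, q, hp, hq, hpq, ⟨e⟩⟩ | ⟨e⟩)
    · haveI : NeZero (p ^ 2) := ⟨pow_ne_zero _ hp.pos.ne'⟩
      refine key_of_mulEquiv e (key_cyclic hp hp ?_)
      rw [Nat.card_eq_fintype_card, Fintype.card_multiplicative, ZMod.card, sq]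
    · haveI : NeZero (p * q) := ⟨Nat.mul_ne_zero hp.pos.ne' hq.pos.ne'⟩
      refine key_of_mulEquiv e (key_cyclic hp hq ?_)
      rw [Nat.card_eq_fintype_card, Fintype.card_multiplicative, ZMod.card]
    · obtain ⟨e'⟩ := e
      exact key_of_mulEquiv e' key_quaternion
end

section
/- For a prime p and integer k ≥ 2, the proper reduced power graph RP*(ℤ_{p^k}) is isomorphic to the complete k-partite graph K_{p−1, p(p−1), ..., p^{k−1}(p−1)}. -/
open SimpleGraph

/-- The complete multipartite graph on a family of vertex sets: vertices in different parts are
adjacent, vertices in the same part are not. -/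
def completeMultipartiteGraph' {ι : Type*} (V : ι → Type*) : SimpleGraph (Σ i, V i) where
  Adj u v := u.1 ≠ v.1
  symm := ⟨fun u v h => h.symm⟩
  loopless := ⟨fun u h => h rfl⟩

section Aux

variable {α : Type*} [Group α] [Fintype α] [IsCyclic α]

lemma mem_zpowers_of_orderOf_dvd' (u v : α) (h : orderOf u ∣ orderOf v) :
    u ∈ Subgroup.zpowers v := by
  classical
  have hcard : ((Subgroup.zpowers v : Set α).toFinset).card = orderOf v := by
    simp [Set.toFinset_card, ← Nat.card_eq_fintype_card, Nat.card_zpowers]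
  have hsub : (Subgroup.zpowers v : Set α).toFinset ⊆ ({a : α | a ^ orderOf v = 1} : Finset α) := by
    intro x hx
    simp only [Set.mem_toFinset, SetLike.mem_coe] at hx
    simp only [Finset.mem_filter, Finset.mem_univ, true_and, Set.mem_setOf_eq]
    exact orderOf_dvd_iff_pow_eq_one.mp (orderOf_dvd_of_mem_zpowers hx)
  have hle := IsCyclic.card_pow_eq_one_le (α := α) (n := orderOf v) (orderOf_pos v)
  have heq := Finset.eq_of_subset_of_card_le hsub (by omega)
  have hu : u ∈ ({a : α | a ^ orderOf v = 1} : Finset α) := by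
    simp only [Finset.mem_filter, Finset.mem_univ, true_and, Set.mem_setOf_eq]
    exact orderOf_dvd_iff_pow_eq_one.mp h
  rw [← heq] at hu
  simpa using hu

lemma zpowers_le_iff' (u v : α) :
    Subgroup.zpowers u ≤ Subgroup.zpowers v ↔ orderOf u ∣ orderOf v :=
  ⟨fun h => orderOf_dvd_of_mem_zpowers (h (Subgroup.mem_zpowers u)),
   fun h => Subgroup.zpowers_le.mpr (mem_zpowers_of_orderOf_dvd' u v h)⟩

end Aux

/-- For a prime p and k ≥ 2,
RP*(ℤ_{p^k}) ≅ K_{p−1, p(p−1), …, p^{k−1}(p−1)}. -/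
theorem stmt6 (p k : ℕ) (hp : p.Prime) (hk : 2 ≤ k) :
    Nonempty ((properRedPowGraph (Multiplicative (ZMod (p ^ k)))) ≃g
      completeMultipartiteGraph' (fun i : Fin k => Fin (p ^ (i : ℕ) * (p - 1)))) := by
  classical
  haveI : Fact p.Prime := ⟨hp⟩
  haveI : NeZero (p ^ k) := ⟨pow_ne_zero k hp.pos.ne'⟩
  set G := Multiplicative (ZMod (p ^ k)) with hG
  have hcard : Fintype.card G = p ^ k := by
    show Fintype.card (Multiplicative (ZMod (p ^ k))) = p ^ k
    rw [Fintype.card_multiplicative, ZMod.card]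
  have hdvd : ∀ x : G, orderOf x ∣ p ^ k := fun x => by
    have h1 : orderOf x ∣ Fintype.card G := orderOf_dvd_card
    rwa [hcard] at h1
  -- the index function
  have key : ∀ x : {x : G // x ≠ 1},
      1 ≤ (orderOf x.1).factorization p ∧ (orderOf x.1).factorization p ≤ k ∧
        orderOf x.1 = p ^ ((orderOf x.1).factorization p) := by
    intro x
    obtain ⟨m, hmk, hm⟩ := (Nat.dvd_prime_pow hp).mp (hdvd x.1)
    have hm1 : 1 ≤ m := by
      rcases Nat.eq_zero_or_pos m with h0 | h1
      · exfalso
        apply x.2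
        have : orderOf x.1 = 1 := by rw [hm, h0, pow_zero]
        exact orderOf_eq_one_iff.mp this
      · exact h1
    have hfac : (orderOf x.1).factorization p = m := by
      rw [hm, hp.factorization_pow, Finsupp.single_eq_same]
    exact ⟨hfac ▸ hm1, hfac ▸ hmk, by rw [hfac, ← hm]⟩
  let idx : {x : G // x ≠ 1} → Fin k := fun x =>
    ⟨(orderOf x.1).factorization p - 1, by have := key x; omega⟩
  have horder : ∀ x : {x : G // x ≠ 1}, orderOf x.1 = p ^ ((idx x : ℕ) + 1) := by
    intro x
    have h := key x
    have : ((idx x : ℕ) + 1) = (orderOf x.1).factorization p := by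
      simp only [idx]
      omega
    rw [this]
    exact h.2.2
  -- adjacency characterization
  have hadj : ∀ x y : {x : G // x ≠ 1},
      (properRedPowGraph G).Adj x y ↔ idx x ≠ idx y := by
    intro x y
    have hx := horder x
    have hy := horder y
    have hlt : ∀ u v : {x : G // x ≠ 1},
        Subgroup.zpowers u.1 < Subgroup.zpowers v.1 ↔ (idx u : ℕ) < (idx v : ℕ) := by
      intro u v
      rw [lt_iff_le_not_ge, zpowers_le_iff', zpowers_le_iff', horder u, horder v,
        Nat.pow_dvd_pow_iff_le_right hp.one_lt, Nat.pow_dvd_pow_iff_le_right hp.one_lt]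
      omega
    show (Subgroup.zpowers x.1 < Subgroup.zpowers y.1 ∨
        Subgroup.zpowers y.1 < Subgroup.zpowers x.1) ↔ idx x ≠ idx y
    rw [hlt, hlt]
    constructor
    · rintro (h | h) h'
      · rw [h'] at h; omega
      · rw [h'] at h; omega
    · intro h
      rcases Nat.lt_or_ge (idx x : ℕ) (idx y : ℕ) with h1 | h1
      · exact Or.inl h1
      · rcases Nat.lt_or_ge (idx y : ℕ) (idx x : ℕ) with h2 | h2
        · exact Or.inr h2
        · exact absurd (Fin.ext (by omega)) h
  -- fiber cardinalities
  have hfibcard : ∀ i : Fin k,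
      Fintype.card {x : {x : G // x ≠ 1} // idx x = i} = p ^ (i : ℕ) * (p - 1) := by
    intro i
    have hne1 : p ^ ((i : ℕ) + 1) ≠ 1 := by
      intro h
      have := hp.one_lt
      have : p ≤ p ^ ((i : ℕ) + 1) := Nat.le_self_pow (by omega) p
      omega
    have efib : {x : {x : G // x ≠ 1} // idx x = i} ≃ {y : G // orderOf y = p ^ ((i : ℕ) + 1)} :=
      { toFun := fun x => ⟨x.1.1, by rw [horder x.1, x.2]⟩
        invFun := fun y => by
          refine ⟨⟨y.1, ?_⟩, ?_⟩
          · intro h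
            apply hne1
            rw [← y.2, h, orderOf_one]
          · have hfac : (orderOf y.1).factorization p = (i : ℕ) + 1 := by
              rw [y.2, hp.factorization_pow, Finsupp.single_eq_same]
            exact Fin.ext (by simp only [idx, hfac]; omega)
        left_inv := fun x => by ext; rfl
        right_inv := fun y => by ext; rfl }
    rw [Fintype.card_congr efib]
    have hd : p ^ ((i : ℕ) + 1) ∣ Fintype.card G := by
      rw [hcard]
      exact pow_dvd_pow p (by omega)
    have := IsCyclic.card_orderOf_eq_totient (α := G) hd
    rw [Fintype.card_subtype]
    calc (Finset.univ.filter fun y : G => orderOf y = p ^ ((i : ℕ) + 1)).card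
        = Nat.totient (p ^ ((i : ℕ) + 1)) := this
      _ = p ^ ((i : ℕ) + 1 - 1) * (p - 1) := Nat.totient_prime_pow hp (by omega)
      _ = p ^ (i : ℕ) * (p - 1) := by simp
  -- build the equivalence
  let eFib : ∀ i : Fin k, {x : {x : G // x ≠ 1} // idx x = i} ≃ Fin (p ^ (i : ℕ) * (p - 1)) :=
    fun i => Fintype.equivFinOfCardEq (hfibcard i)
  let e : {x : G // x ≠ 1} ≃ Σ i : Fin k, Fin (p ^ (i : ℕ) * (p - 1)) :=
    (Equiv.sigmaFiberEquiv idx).symm.trans (Equiv.sigmaCongrRight eFib)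
  have hefst : ∀ x, (e x).1 = idx x := fun x => rfl
  refine ⟨⟨e, ?_⟩⟩
  intro x y
  show (e x).1 ≠ (e y).1 ↔ (properRedPowGraph G).Adj x y
  rw [hefst, hefst, hadj]
end

section
/- For every finite group G, the reduced power graph RP(G) is a perfect graph. -/
open SimpleGraph

/-- A graph is perfect if for every induced subgraph the chromatic number equals
the clique number. -/
def IsPerfect {V : Type*} (Γ : SimpleGraph V) : Prop :=
  ∀ s : Set V, (Γ.induce s).chromaticNumber = ((Γ.induce s).cliqueNum : ℕ∞)

/-- A comparability graph of a finite preorder satisfies χ = ω. -/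
lemma comparability_chromatic_eq_clique {V : Type*} [Fintype V] [Preorder V]
    (Γ : SimpleGraph V) (hA : ∀ u v, Γ.Adj u v ↔ u < v ∨ v < u) :
    Γ.chromaticNumber = (Γ.cliqueNum : ℕ∞) := by
  classical
  -- heights are finite
  have hfin : ∀ v : V, Order.height v ≠ ⊤ := by
    intro v
    have : Order.height v ≤ (Fintype.card V : ℕ∞) := by
      apply Order.height_le
      intro p _
      exact_mod_cast p.length_lt_card.le
    exact (this.trans_lt (WithTop.coe_lt_top _)).ne
  -- every height gives a clique of size height+1
  have key : ∀ v : V, (Order.height v).toNat + 1 ≤ Γ.cliqueNum := by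
    intro v
    obtain ⟨p, hlast, hlen⟩ :=
      Order.exists_series_of_height_eq_coe v (ENat.coe_toNat (hfin v)).symm
    have hinj : Function.Injective p.toFun := p.strictMono.injective
    set t : Finset V := Finset.univ.image p.toFun with ht
    have hcard : t.card = p.length + 1 := by
      rw [ht, Finset.card_image_of_injective _ hinj, Finset.card_univ, Fintype.card_fin]
    have hclique : Γ.IsClique (t : Set V) := by
      intro x hx y hy hxy
      simp only [ht, Finset.coe_image, Finset.coe_univ, Set.image_univ, Set.mem_range] at hx hy
      obtain ⟨i, rfl⟩ := hx
      obtain ⟨j, rfl⟩ := hy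
      rcases lt_trichotomy i j with h | h | h
      · exact (hA _ _).mpr (Or.inl (p.strictMono h))
      · exact absurd (congrArg p.toFun h) hxy
      · exact (hA _ _).mpr (Or.inr (p.strictMono h))
    have := hclique.card_le_cliqueNum
    omega
  -- coloring by height
  have hcol : Γ.Colorable Γ.cliqueNum := by
    refine ⟨SimpleGraph.Coloring.mk
      (fun v => ⟨(Order.height v).toNat, by have := key v; omega⟩) ?_⟩
    intro u v huv hEq
    have hne : Order.height u ≠ Order.height v := by
      rcases (hA u v).mp huv with h | h
      · exact (Order.height_strictMono h ((hfin u).lt_top)).ne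
      · exact (Order.height_strictMono h ((hfin v).lt_top)).ne'
    apply hne
    have : (Order.height u).toNat = (Order.height v).toNat := congrArg Fin.val hEq
    rw [← ENat.coe_toNat (hfin u), ← ENat.coe_toNat (hfin v), this]
  have h2 : Γ.chromaticNumber ≤ (Γ.cliqueNum : ℕ∞) := hcol.chromaticNumber_le
  refine le_antisymm h2 ?_
  obtain ⟨t, ht⟩ := Γ.exists_isNClique_cliqueNum
  have hχ := Γ.colorable_chromaticNumber_of_fintype
  have hle : Γ.cliqueNum ≤ (Γ.chromaticNumber).toNat := by
    rw [← ht.card_eq]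
    exact ht.isClique.card_le_of_colorable hχ
  have hne : Γ.chromaticNumber ≠ ⊤ :=
    (h2.trans_lt (WithTop.coe_lt_top _)).ne
  calc (Γ.cliqueNum : ℕ∞) ≤ ((Γ.chromaticNumber).toNat : ℕ∞) := by exact_mod_cast hle
    _ = Γ.chromaticNumber := ENat.coe_toNat hne

/-- For every finite group G, RP(G) is perfect. -/
theorem stmt9 {G : Type*} [Group G] [Fintype G] : IsPerfect (redPowGraph G) := by
  classical
  intro s
  letI : Preorder ↥s := Preorder.lift (fun v => Subgroup.zpowers (v : G))
  haveI : Fintype ↥s := Fintype.ofFinite ↥s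
  exact comparability_chromatic_eq_clique _ (fun u v => Iff.rfl)
end

section
/- Let G be a finite group. Then RP*(G) is acyclic (contains no cycle) if and only if every element order of G lies in {1, 4} ∪ {primes}. -/
open SimpleGraph

section Aux
open Subgroup
set_option linter.unusedSectionVars false

variable {G : Type*} [Group G] [Fintype G]

lemma adj_def {u v : {x : G // x ≠ 1}} :
    (properRedPowGraph G).Adj u v ↔
      (zpowers (u : G) < zpowers (v : G) ∨ zpowers (v : G) < zpowers (u : G)) := Iff.rfl

lemma zpowers_lt {a b : G} (h : a ∈ zpowers b) (hlt : orderOf a < orderOf b) :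
    zpowers a < zpowers b := by
  refine lt_of_le_of_ne (zpowers_le.mpr h) fun he => ?_
  rw [← Nat.card_zpowers a, ← Nat.card_zpowers b, he] at hlt
  exact lt_irrefl _ hlt

lemma zpowers_pow_lt_s10 {y : G} {k : ℕ} (h : orderOf (y ^ k) < orderOf y) :
    zpowers (y ^ k) < zpowers y :=
  zpowers_lt (pow_mem (mem_zpowers y) k) h

lemma notAcyclic_of_triangle {V : Type*} {H : SimpleGraph V} {a b c : V}
    (hab : H.Adj a b) (hbc : H.Adj b c) (hca : H.Adj c a) : ¬ H.IsAcyclic := by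
  intro hA
  refine hA (Walk.cons hab (Walk.cons hbc (Walk.cons hca Walk.nil))) ?_
  have h1 := hab.ne; have h2 := hbc.ne; have h3 := hca.ne
  simp [Walk.isCycle_def, Walk.isTrail_def]
  aesop

lemma notAcyclic_of_square {V : Type*} {H : SimpleGraph V} {a b c d : V}
    (hab : H.Adj a b) (hbc : H.Adj b c) (hcd : H.Adj c d) (hda : H.Adj d a)
    (hac : a ≠ c) (hbd : b ≠ d) : ¬ H.IsAcyclic := by
  intro hA
  refine hA (Walk.cons hab (Walk.cons hbc (Walk.cons hcd (Walk.cons hda Walk.nil)))) ?_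
  have h1 := hab.ne; have h2 := hbc.ne; have h3 := hcd.ne; have h4 := hda.ne
  simp [Walk.isCycle_def, Walk.isTrail_def]
  aesop

-- case n = p^3
lemma cyc_p3 {y : G} {p : ℕ} (hp : p.Prime) (hy : orderOf y = p ^ 3) :
    ¬ (properRedPowGraph G).IsAcyclic := by
  have hp1 : 1 < p := hp.one_lt
  have h1 : orderOf (y ^ p) = p ^ 2 := by
    rw [orderOf_pow_of_dvd hp.ne_zero (hy ▸ dvd_pow_self p (by norm_num)), hy]
    rw [pow_succ' p 2, Nat.mul_div_cancel_left _ hp.pos]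
  have h2 : orderOf (y ^ p ^ 2) = p := by
    rw [orderOf_pow_of_dvd (pow_ne_zero 2 hp.ne_zero) (hy ▸ pow_dvd_pow p (by norm_num)), hy]
    rw [pow_succ, Nat.mul_div_cancel_left _ (pow_pos hp.pos 2)]
  have o1 : (1:ℕ) < p ^ 2 := one_lt_pow₀ hp1 (by norm_num)
  have o2 : p < p ^ 2 := by nlinarith
  have o3 : p ^ 2 < p ^ 3 := by nlinarith [hp.pos]
  have ha : y ≠ 1 := by intro h; rw [h, orderOf_one] at hy; nlinarith [hp.pos]
  have hb : y ^ p ≠ 1 := by intro h; rw [h, orderOf_one] at h1; omega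
  have hc : y ^ p ^ 2 ≠ 1 := by intro h; rw [h, orderOf_one] at h2; omega
  refine notAcyclic_of_triangle (a := ⟨y, ha⟩) (b := ⟨y ^ p, hb⟩) (c := ⟨y ^ p ^ 2, hc⟩)
    ?_ ?_ ?_
  · exact Or.inr (zpowers_pow_lt_s10 (by rw [h1, hy]; exact o3))
  · refine Or.inr (zpowers_lt ?_ (by rw [h1, h2]; exact o2))
    show y ^ p ^ 2 ∈ zpowers (y ^ p)
    have : y ^ p ^ 2 = (y ^ p) ^ p := by rw [← pow_mul, pow_two]
    rw [this]; exact pow_mem (mem_zpowers _) p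
  · exact Or.inl (zpowers_pow_lt_s10 (by rw [h2, hy]; exact lt_trans o2 o3))

-- case n = p*q, distinct primes
lemma cyc_pq {y : G} {p q : ℕ} (hp : p.Prime) (hq : q.Prime) (hne : p ≠ q)
    (hy : orderOf y = p * q) : ¬ (properRedPowGraph G).IsAcyclic := by
  have hbo : orderOf (y ^ q) = p := by
    rw [orderOf_pow_of_dvd hq.ne_zero (hy ▸ Dvd.intro p (mul_comm q p)), hy,
      Nat.mul_div_cancel _ hq.pos]
  have hdo : orderOf (y ^ p) = q := by
    rw [orderOf_pow_of_dvd hp.ne_zero (hy ▸ Dvd.intro_left q (mul_comm q p)), hy,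
      Nat.mul_div_cancel_left _ hp.pos]
  have hpq6 : 2 < p * q := by nlinarith [hp.one_lt, hq.one_lt]
  have hplt : p < p * q := by nlinarith [hp.one_lt, hq.one_lt]
  have hqlt : q < p * q := by nlinarith [hp.one_lt, hq.one_lt]
  have ha : y ≠ 1 := by
    intro h; rw [h, orderOf_one] at hy; nlinarith [hp.one_lt, hq.one_lt]
  have hb : y ^ q ≠ 1 := by
    intro h; rw [h, orderOf_one] at hbo; exact hp.one_lt.ne' hbo.symm
  have hd : y ^ p ≠ 1 := by
    intro h; rw [h, orderOf_one] at hdo; exact hq.one_lt.ne' hdo.symm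
  have hc : y⁻¹ ≠ 1 := fun h => ha (inv_eq_one.mp h)
  have hio : orderOf (y⁻¹) = p * q := by rw [orderOf_inv, hy]
  have hac : y ≠ y⁻¹ := by
    intro h
    have h2 : y ^ 2 = 1 := by rw [pow_two]; nth_rewrite 2 [h]; exact mul_inv_cancel y
    have := Nat.le_of_dvd (by norm_num) (hy ▸ orderOf_dvd_of_pow_eq_one h2)
    omega
  have hbd : y ^ q ≠ y ^ p := by
    intro h; rw [h, hdo] at hbo; exact hne hbo.symm
  refine notAcyclic_of_square (a := ⟨y, ha⟩) (b := ⟨y ^ q, hb⟩) (c := ⟨y⁻¹, hc⟩)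
    (d := ⟨y ^ p, hd⟩) ?_ ?_ ?_ ?_ ?_ ?_
  · exact Or.inr (zpowers_pow_lt_s10 (by rw [hbo, hy]; exact hplt))
  · refine Or.inl ?_
    show zpowers (y ^ q) < zpowers y⁻¹
    rw [zpowers_inv]
    exact zpowers_pow_lt_s10 (by rw [hbo, hy]; exact hplt)
  · refine Or.inr ?_
    show zpowers (y ^ p) < zpowers y⁻¹
    rw [zpowers_inv]
    exact zpowers_pow_lt_s10 (by rw [hdo, hy]; exact hqlt)
  · exact Or.inl (zpowers_pow_lt_s10 (by rw [hdo, hy]; exact hqlt))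
  · exact fun h => hac (congrArg Subtype.val h)
  · exact fun h => hbd (congrArg Subtype.val h)

-- case n = p^2, p odd prime
lemma cyc_p2 {y : G} {p : ℕ} (hp : p.Prime) (hodd : p ≠ 2)
    (hy : orderOf y = p ^ 2) : ¬ (properRedPowGraph G).IsAcyclic := by
  have hp3 : 3 ≤ p := hp.two_le.lt_of_ne (Ne.symm hodd)
  have hbo : orderOf (y ^ p) = p := by
    rw [orderOf_pow_of_dvd hp.ne_zero (hy ▸ dvd_pow_self p (by norm_num)), hy,
      pow_two, Nat.mul_div_cancel _ hp.pos]
  have hdo : orderOf (y ^ (2 * p)) = p := by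
    rw [orderOf_pow' _ (by positivity), hy]
    have hg : Nat.gcd (p ^ 2) (2 * p) = p := by
      have hcop : Nat.Coprime p 2 := (Nat.coprime_primes hp Nat.prime_two).mpr hodd
      rw [pow_two, Nat.mul_comm 2 p, Nat.gcd_mul_left, hcop.gcd_eq_one, mul_one]
    rw [hg, pow_two, Nat.mul_div_cancel _ hp.pos]
  have hplt : p < p ^ 2 := by nlinarith
  have ha : y ≠ 1 := by intro h; rw [h, orderOf_one] at hy; nlinarith
  have hb : y ^ p ≠ 1 := by
    intro h; rw [h, orderOf_one] at hbo; exact hp.one_lt.ne' hbo.symm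
  have hd : y ^ (2 * p) ≠ 1 := by
    intro h; rw [h, orderOf_one] at hdo; exact hp.one_lt.ne' hdo.symm
  have hc : y⁻¹ ≠ 1 := fun h => ha (inv_eq_one.mp h)
  have hac : y ≠ y⁻¹ := by
    intro h
    have h2 : y ^ 2 = 1 := by rw [pow_two]; nth_rewrite 2 [h]; exact mul_inv_cancel y
    have := Nat.le_of_dvd (by norm_num) (hy ▸ orderOf_dvd_of_pow_eq_one h2)
    nlinarith
  have hbd : y ^ p ≠ y ^ (2 * p) := by
    intro h
    have h2 : y ^ p = 1 := by
      have : y ^ (2 * p) = y ^ p * y ^ p := by rw [← pow_add, two_mul]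
      rw [this] at h
      exact (left_eq_mul.mp h)
    exact hb h2
  refine notAcyclic_of_square (a := ⟨y, ha⟩) (b := ⟨y ^ p, hb⟩) (c := ⟨y⁻¹, hc⟩)
    (d := ⟨y ^ (2 * p), hd⟩) ?_ ?_ ?_ ?_ ?_ ?_
  · exact Or.inr (zpowers_pow_lt_s10 (by rw [hbo, hy]; exact hplt))
  · refine Or.inl ?_
    show zpowers (y ^ p) < zpowers y⁻¹
    rw [zpowers_inv]
    exact zpowers_pow_lt_s10 (by rw [hbo, hy]; exact hplt)
  · refine Or.inr ?_
    show zpowers (y ^ (2 * p)) < zpowers y⁻¹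
    rw [zpowers_inv]
    exact zpowers_pow_lt_s10 (by rw [hdo, hy]; exact hplt)
  · exact Or.inl (zpowers_pow_lt_s10 (by rw [hdo, hy]; exact hplt))
  · exact fun h => hac (congrArg Subtype.val h)
  · exact fun h => hbd (congrArg Subtype.val h)

lemma nt_split {n : ℕ} (h1 : n ≠ 1) (h4 : n ≠ 4) (hnp : ¬ n.Prime) (h0 : n ≠ 0) :
    (∃ p q, p.Prime ∧ q.Prime ∧ p ≠ q ∧ p * q ∣ n) ∨
    (∃ p, p.Prime ∧ p ^ 3 ∣ n) ∨ (∃ p, p.Prime ∧ p ≠ 2 ∧ p ^ 2 ∣ n) := by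
  by_cases hpp : IsPrimePow n
  · obtain ⟨p, k, hp, hk, rfl⟩ := hpp
    have hp' : p.Prime := hp.nat_prime
    match k, hk with
    | 1, _ => exact absurd (by simpa using hp') hnp
    | 2, _ =>
      refine Or.inr (Or.inr ⟨p, hp', ?_, dvd_refl _⟩)
      intro h2; exact h4 (by rw [h2]; norm_num)
    | (m+3), _ => exact Or.inr (Or.inl ⟨p, hp', pow_dvd_pow p (by omega)⟩)
  · rw [isPrimePow_iff_unique_prime_dvd] at hpp
    have hm : n.minFac.Prime := Nat.minFac_prime h1
    have hmd : n.minFac ∣ n := Nat.minFac_dvd n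
    have : ¬ ∀ q, (q.Prime ∧ q ∣ n) → q = n.minFac := by
      intro hall; exact hpp ⟨n.minFac, ⟨hm, hmd⟩, fun q hq => hall q hq⟩
    push_neg at this
    obtain ⟨q, ⟨hq, hqd⟩, hqne⟩ := this
    refine Or.inl ⟨n.minFac, q, hm, hq, fun h => hqne h.symm, ?_⟩
    exact (Nat.Coprime.mul_dvd_of_dvd_of_dvd
      ((Nat.coprime_primes hm hq).mpr (fun h => hqne h.symm)) hmd hqd)

section Backward
variable (H : ∀ x : G, orderOf x = 1 ∨ orderOf x = 4 ∨ (orderOf x).Prime)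

include H in
lemma key {a w : G} (ha : a ≠ 1) (hlt : zpowers a < zpowers w) :
    orderOf w = 4 ∧ a = w ^ 2 := by
  have haw : a ∈ zpowers w := hlt.le (mem_zpowers a)
  have hdvd : orderOf a ∣ orderOf w := orderOf_dvd_of_mem_zpowers haw
  have hne : orderOf a ≠ orderOf w := by
    intro h
    refine hlt.ne (eq_of_le_of_card_ge hlt.le ?_)
    rw [Nat.card_zpowers, Nat.card_zpowers, h]
  have ha0 : 0 < orderOf a := orderOf_pos a
  have ha1 : orderOf a ≠ 1 := fun h => ha (orderOf_eq_one_iff.mp h)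
  have hw0 : 0 < orderOf w := orderOf_pos w
  have hltord : orderOf a < orderOf w := lt_of_le_of_ne (Nat.le_of_dvd hw0 hdvd) hne
  have hw4 : orderOf w = 4 := by
    rcases H w with h | h | h
    · omega
    · exact h
    · rcases (Nat.Prime.eq_one_or_self_of_dvd h _ hdvd) with h' | h'
      · exact absurd h' ha1
      · omega
  have ha2 : orderOf a = 2 := by
    rw [hw4] at hdvd hltord
    interval_cases h : orderOf a
    · exact absurd rfl ha1
    · rfl
    · exact absurd hdvd (by norm_num)
  obtain ⟨k, hk⟩ := mem_powers_iff_mem_zpowers.mpr haw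
  replace hk : w ^ k = a := hk
  have hsq2 : (w ^ 2) ^ 2 = 1 := by
    rw [← pow_mul]
    show w ^ 4 = 1
    rw [← hw4]; exact pow_orderOf_eq_one w
  have hk2 : a ^ 2 = 1 := by rw [← ha2]; exact pow_orderOf_eq_one a
  have h2k : w ^ (k * 2) = 1 := by rw [pow_mul, hk, hk2]
  have h4d : 4 ∣ k * 2 := hw4 ▸ orderOf_dvd_of_pow_eq_one h2k
  have hke : 2 ∣ k := by omega
  obtain ⟨m, rfl⟩ := hke
  have haw2 : a = (w ^ 2) ^ m := by rw [← pow_mul, hk]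
  rcases Nat.even_or_odd m with ⟨l, rfl⟩ | ⟨l, rfl⟩
  · exfalso
    apply ha
    rw [haw2, ← two_mul, pow_mul, hsq2, one_pow]
  · refine ⟨hw4, ?_⟩
    rw [haw2, pow_succ, pow_mul, hsq2, one_pow, one_mul]

include H in
lemma adj_class {u v : {x : G // x ≠ 1}} (h : (properRedPowGraph G).Adj u v) :
    (orderOf (v : G) = 4 ∧ (u : G) = (v : G) ^ 2) ∨
      (orderOf (u : G) = 4 ∧ (v : G) = (u : G) ^ 2) := by
  rcases h with h | h
  · exact Or.inl (key H u.2 h)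
  · exact Or.inr (key H v.2 h)

include H in
lemma nbr_eq_sq {u w : {x : G // x ≠ 1}} (hw4 : orderOf (w : G) = 4)
    (h : (properRedPowGraph G).Adj w u) : (u : G) = (w : G) ^ 2 := by
  rcases adj_class H h with ⟨h4, he⟩ | ⟨h4, he⟩
  · exfalso
    have : orderOf (w : G) = 2 := by
      rw [he, orderOf_pow_of_dvd (by norm_num) (by rw [h4]; norm_num), h4]
    omega
  · exact he

include H in
lemma no_cycle_at4 {w : {x : G // x ≠ 1}} (hw4 : orderOf (w : G) = 4)
    (c : (properRedPowGraph G).Walk w w) (hc : c.IsCycle) : False := by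
  cases c with
  | nil => exact hc.not_of_nil
  | cons h q =>
    rename_i u
    have hlen := hc.three_le_length
    have hu : (u : G) = (w : G) ^ 2 := nbr_eq_sq H hw4 h
    obtain ⟨hq, -⟩ := (Walk.cons_isCycle_iff q h).mp hc
    have hqr : q.reverse.IsPath := hq.reverse
    have hwu : w ≠ u := h.ne
    have hnn : ¬ q.reverse.Nil := Walk.not_nil_of_ne hwu
    obtain ⟨m, h', r, heq⟩ := Walk.not_nil_iff.mp hnn
    have hm : (m : G) = (w : G) ^ 2 := nbr_eq_sq H hw4 h'
    have hmu : m = u := Subtype.ext (hm.trans hu.symm)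
    subst hmu
    rw [heq] at hqr
    rw [Walk.cons_isPath_iff] at hqr
    have hr : r = Walk.nil := (Walk.isPath_iff_eq_nil (p := r)).mp hqr.1
    subst hr
    have h1 : q.reverse.length = 1 := by rw [heq]; simp
    rw [Walk.length_reverse] at h1
    simp [Walk.length_cons, h1] at hlen
end Backward

end Aux

/-- RP*(G) is acyclic iff every element order of G lies in {1,4} ∪ primes. -/
theorem stmt10 {G : Type*} [Group G] [Fintype G] :
    (properRedPowGraph G).IsAcyclic ↔
      ∀ x : G, orderOf x = 1 ∨ orderOf x = 4 ∨ (orderOf x).Prime := by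
  constructor
  · intro hA
    by_contra hbad
    push_neg at hbad
    obtain ⟨x, h1, h4, hp⟩ := hbad
    have h0 : orderOf x ≠ 0 := (orderOf_pos x).ne'
    rcases nt_split h1 h4 hp h0 with ⟨p, q, hp', hq', hne, hd⟩ | ⟨p, hp', hd⟩ | ⟨p, hp', hne2, hd⟩
    · exact cyc_pq hp' hq' hne (orderOf_pow_orderOf_div h0 hd) hA
    · exact cyc_p3 hp' (orderOf_pow_orderOf_div h0 hd) hA
    · exact cyc_p2 hp' hne2 (orderOf_pow_orderOf_div h0 hd) hA
  · intro H
    have : DecidableEq {x : G // x ≠ 1} := Classical.decEq _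
    intro v c hc
    cases c with
    | nil => exact hc.not_of_nil
    | cons h p =>
      rename_i u
      rcases adj_class H h with ⟨h4, -⟩ | ⟨h4, -⟩
      · have hu : u ∈ (Walk.cons h p).support := by
          rw [Walk.support_cons]
          exact List.mem_cons_of_mem _ p.start_mem_support
        exact no_cycle_at4 H h4 _ (hc.rotate hu)
      · exact no_cycle_at4 H h4 _ hc
end

section
/- Let G be a finite group. Then RP*(G) is claw-free if and only if every element order of G lies in {1,4} ∪ {primes} and any two distinct cyclic subgroups of order 4 in G intersect trivially. -/
open SimpleGraph

set_option linter.unusedSectionVars false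

open Subgroup

section Helpers

variable {G : Type*} [Group G] [Fintype G]

lemma zp_lt_order {u v : G} (h : zpowers u < zpowers v) : orderOf u < orderOf v := by
  have h1 : Nat.card (zpowers u) ≤ Nat.card (zpowers v) := Subgroup.card_le_of_le h.le
  have h2 : Nat.card (zpowers u) ≠ Nat.card (zpowers v) := fun he =>
    h.ne (Subgroup.eq_of_le_of_card_ge h.le he.ge)
  rw [Nat.card_zpowers, Nat.card_zpowers] at h1 h2
  omega

lemma zp_dvd_order {u v : G} (h : zpowers u < zpowers v) : orderOf u ∣ orderOf v :=
  orderOf_dvd_of_mem_zpowers (zpowers_le.mp h.le)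

lemma zp_eq_of_order_eq {u v : G} (h : u ∈ zpowers v) (ho : orderOf u = orderOf v) :
    zpowers u = zpowers v :=
  Subgroup.eq_of_le_of_card_ge (zpowers_le.mpr h)
    (by rw [Nat.card_zpowers, Nat.card_zpowers, ho])

lemma zp_lt_of_order_ne {u v : G} (h : u ∈ zpowers v) (ho : orderOf u ≠ orderOf v) :
    zpowers u < zpowers v :=
  lt_of_le_of_ne (zpowers_le.mpr h)
    (fun he => ho (by rw [← Nat.card_zpowers, ← Nat.card_zpowers, he]))

lemma mem_four {x u : G} (hx : orderOf x = 4) (h : u ∈ zpowers x) :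
    u = 1 ∨ u = x ∨ u = x ^ 2 ∨ u = x ^ 3 := by
  obtain ⟨k, hk⟩ := Subgroup.mem_zpowers_iff.mp h
  have hmod : x ^ (k % 4) = u := by
    rw [← hk]
    have := zpow_mod_orderOf x k
    rwa [hx] at this
  have h0 : (0:ℤ) ≤ k % 4 := Int.emod_nonneg k (by norm_num)
  have h4 : k % 4 < 4 := Int.emod_lt_of_pos k (by norm_num)
  have : k % 4 = 0 ∨ k % 4 = 1 ∨ k % 4 = 2 ∨ k % 4 = 3 := by omega
  rcases this with h | h | h | h <;> rw [h] at hmod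
  · left; rw [← hmod]; norm_num
  · right; left; rw [← hmod]; norm_num
  · right; right; left; rw [← hmod]
    rw [show (2:ℤ) = ((2:ℕ):ℤ) by norm_num, zpow_natCast]
  · right; right; right; rw [← hmod]
    rw [show (3:ℤ) = ((3:ℕ):ℤ) by norm_num, zpow_natCast]

lemma ord_sq {x : G} (hx : orderOf x = 4) : orderOf (x ^ 2) = 2 := by
  rw [orderOf_pow, hx]; decide

lemma ord_cube {x : G} (hx : orderOf x = 4) : orderOf (x ^ 3) = 4 := by
  rw [orderOf_pow, hx]; decide

lemma invol_eq {x u : G} (hx : orderOf x = 4) (h : u ∈ zpowers x) (hu : orderOf u = 2) :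
    u = x ^ 2 := by
  rcases mem_four hx h with h1 | h1 | h1 | h1
  · rw [h1, orderOf_one] at hu; omega
  · rw [h1] at hu; omega
  · exact h1
  · rw [h1, ord_cube hx] at hu; omega

lemma gen_four {x u : G} (hx : orderOf x = 4) (h : u ∈ zpowers x) (hu : orderOf u = 4) :
    u = x ∨ u = x ^ 3 := by
  rcases mem_four hx h with h1 | h1 | h1 | h1
  · rw [h1, orderOf_one] at hu; omega
  · exact Or.inl h1
  · rw [h1, ord_sq hx] at hu; omega
  · exact Or.inr h1

lemma ne_one_of_ord {u : G} {m : ℕ} (h : orderOf u = m) (hm : m ≠ 1) : u ≠ 1 := by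
  intro h1; rw [h1, orderOf_one] at h; exact hm h.symm

lemma not_adj_of_order_eq {u v : G} (h : orderOf u = orderOf v) :
    ¬(zpowers u < zpowers v ∨ zpowers v < zpowers u) := by
  rintro (hlt | hlt) <;> have := zp_lt_order hlt <;> omega

lemma not_adj_of_not_dvd {u v : G} (h1 : ¬ orderOf u ∣ orderOf v)
    (h2 : ¬ orderOf v ∣ orderOf u) :
    ¬(zpowers u < zpowers v ∨ zpowers v < zpowers u) := by
  rintro (hlt | hlt)
  · exact h1 (zp_dvd_order hlt)
  · exact h2 (zp_dvd_order hlt)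

end Helpers

section Claw

variable {G : Type*} [Group G]

/-- Existence of a claw, spelled out concretely. -/
def ClawTuple (G : Type*) [Group G] : Prop :=
  ∃ c a b d : {x : G // x ≠ 1}, a ≠ b ∧ a ≠ d ∧ b ≠ d ∧
    (properRedPowGraph G).Adj c a ∧ (properRedPowGraph G).Adj c b ∧
    (properRedPowGraph G).Adj c d ∧
    ¬(properRedPowGraph G).Adj a b ∧ ¬(properRedPowGraph G).Adj a d ∧
    ¬(properRedPowGraph G).Adj b d

lemma claw_iff :
    Nonempty (completeBipartiteGraph (Fin 1) (Fin 3) ↪g properRedPowGraph G) ↔ ClawTuple G := by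
  constructor
  · rintro ⟨f⟩
    refine ⟨f (.inl 0), f (.inr 0), f (.inr 1), f (.inr 2), ?_, ?_, ?_, ?_, ?_, ?_, ?_, ?_, ?_⟩
    · intro h; have := f.injective h; simp at this
    · intro h; have := f.injective h; simp at this
    · intro h; have := f.injective h; simp at this
    · exact f.map_rel_iff.mpr (by simp [completeBipartiteGraph])
    · exact f.map_rel_iff.mpr (by simp [completeBipartiteGraph])
    · exact f.map_rel_iff.mpr (by simp [completeBipartiteGraph])
    · intro h; have := f.map_rel_iff.mp h; simp [completeBipartiteGraph] at this
    · intro h; have := f.map_rel_iff.mp h; simp [completeBipartiteGraph] at this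
    · intro h; have := f.map_rel_iff.mp h; simp [completeBipartiteGraph] at this
  · rintro ⟨c, a, b, d, hab, had, hbd, hca, hcb, hcd, nab, nad, nbd⟩
    have hL : ∀ i : Fin 3, (properRedPowGraph G).Adj c (![a, b, d] i) := by
      intro i; fin_cases i <;> assumption
    have hNL : ∀ i j : Fin 3, i ≠ j →
        ¬(properRedPowGraph G).Adj (![a,b,d] i) (![a,b,d] j) := by
      intro i j hij
      fin_cases i <;> fin_cases j <;> simp at hij ⊢ <;>
        first
          | exact nab | exact nad | exact nbd
          | (intro h; exact nab h.symm) | (intro h; exact nad h.symm)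
          | (intro h; exact nbd h.symm)
    have hvinj : Function.Injective ![a, b, d] := by
      intro i j hij
      fin_cases i <;> fin_cases j <;> simp_all
    refine ⟨⟨⟨Sum.elim (fun _ => c) ![a, b, d], ?_⟩, ?_⟩⟩
    · rintro (i | i) (j | j) h <;> simp only [Sum.elim_inl, Sum.elim_inr] at h
      · cases i; cases j; simp; omega
      · exact absurd h (hL j).ne
      · exact absurd h.symm (hL i).ne
      · rw [hvinj h]
    · rintro (i | i) (j | j) <;>
        simp only [Function.Embedding.coeFn_mk, Sum.elim_inl, Sum.elim_inr,
          completeBipartiteGraph, Sum.isLeft_inl, Sum.isRight_inl, Sum.isLeft_inr,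
          Sum.isRight_inr]
      · exact iff_of_false (properRedPowGraph G).irrefl (by simp)
      · exact iff_of_true (hL j) (by simp)
      · exact iff_of_true (hL i).symm (by simp)
      · refine iff_of_false ?_ (by simp)
        by_cases hij : i = j
        · subst hij; exact (properRedPowGraph G).irrefl
        · exact hNL i j hij

/-- Package up a claw from raw group elements. -/
lemma clawTuple_of (c a b d : G) (hc : c ≠ 1) (ha : a ≠ 1) (hb : b ≠ 1) (hd : d ≠ 1)
    (hab : a ≠ b) (had : a ≠ d) (hbd : b ≠ d)
    (hca : zpowers c < zpowers a ∨ zpowers a < zpowers c)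
    (hcb : zpowers c < zpowers b ∨ zpowers b < zpowers c)
    (hcd : zpowers c < zpowers d ∨ zpowers d < zpowers c)
    (nab : ¬(zpowers a < zpowers b ∨ zpowers b < zpowers a))
    (nad : ¬(zpowers a < zpowers d ∨ zpowers d < zpowers a))
    (nbd : ¬(zpowers b < zpowers d ∨ zpowers d < zpowers b)) : ClawTuple G :=
  ⟨⟨c, hc⟩, ⟨a, ha⟩, ⟨b, hb⟩, ⟨d, hd⟩,
    fun h => hab (congrArg Subtype.val h), fun h => had (congrArg Subtype.val h),
    fun h => hbd (congrArg Subtype.val h),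
    hca, hcb, hcd, nab, nad, nbd⟩

end Claw

section Main

variable {G : Type*} [Group G] [Fintype G]

lemma adj_struct (H1 : ∀ x : G, orderOf x = 1 ∨ orderOf x = 4 ∨ (orderOf x).Prime)
    {u v : G} (hu : u ≠ 1) (h : zpowers u < zpowers v) :
    orderOf v = 4 ∧ orderOf u = 2 ∧ u = v ^ 2 := by
  have hlt := zp_lt_order h
  have hdvd := zp_dvd_order h
  have hmem : u ∈ zpowers v := zpowers_le.mp h.le
  have hu1 : orderOf u ≠ 1 := fun hh => hu (orderOf_eq_one_iff.mp hh)
  have hup : 0 < orderOf u := orderOf_pos u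
  rcases H1 v with h4 | h4 | h4
  · rw [h4] at hlt; omega
  · rw [h4] at hlt hdvd
    have hd4 : orderOf u ∣ 2 ^ 2 := by norm_num; exact hdvd
    have : orderOf u = 2 := by
      rcases (Nat.dvd_prime_pow Nat.prime_two).mp hd4 with ⟨i, hi, he⟩
      interval_cases i
      · simp at he; exact absurd he hu
      · simpa using he
      · simp at he; omega
    exact ⟨h4, this, invol_eq h4 hmem this⟩
  · exact absurd ((Nat.dvd_prime h4).mp hdvd) (by omega)

lemma no_claw (H1 : ∀ x : G, orderOf x = 1 ∨ orderOf x = 4 ∨ (orderOf x).Prime)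
    (H2 : ∀ x y : G, orderOf x = 4 → orderOf y = 4 →
      zpowers x ≠ zpowers y → zpowers x ⊓ zpowers y = ⊥) :
    ¬ ClawTuple G := by
  rintro ⟨c, a, b, d, hab, had, hbd, hca, hcb, hcd, nab, nad, nbd⟩
  -- helper: no leaf can be strictly below the centre
  have no_down : ∀ l1 l2 : {x : G // x ≠ 1}, zpowers l1.1 < zpowers c.1 →
      (properRedPowGraph G).Adj c l2 → l1 ≠ l2 → False := by
    intro l1 l2 h1 h2 hne
    obtain ⟨hc4, _, hl1⟩ := adj_struct H1 l1.2 h1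
    rcases h2 with hlt | hlt
    · obtain ⟨_, hc2, _⟩ := adj_struct H1 c.2 hlt
      omega
    · obtain ⟨_, _, hl2⟩ := adj_struct H1 l2.2 hlt
      exact hne (Subtype.ext (hl1.trans hl2.symm))
  have ha : zpowers c.1 < zpowers a.1 := by
    rcases hca with h | h
    · exact h
    · exact absurd (no_down a b h hcb hab) not_false
  have hb : zpowers c.1 < zpowers b.1 := by
    rcases hcb with h | h
    · exact h
    · exact absurd (no_down b a h hca (Ne.symm hab)) not_false
  have hd : zpowers c.1 < zpowers d.1 := by
    rcases hcd with h | h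
    · exact h
    · exact absurd (no_down d a h hca (Ne.symm had)) not_false
  obtain ⟨ha4, hc2, hca2⟩ := adj_struct H1 c.2 ha
  obtain ⟨hb4, -, hcb2⟩ := adj_struct H1 c.2 hb
  obtain ⟨hd4, -, hcd2⟩ := adj_struct H1 c.2 hd
  have hmema : c.1 ∈ zpowers a.1 := zpowers_le.mp ha.le
  have hmemb : c.1 ∈ zpowers b.1 := zpowers_le.mp hb.le
  have hmemd : c.1 ∈ zpowers d.1 := zpowers_le.mp hd.le
  have zab : zpowers a.1 = zpowers b.1 := by
    by_contra hne
    have hbot := H2 a.1 b.1 ha4 hb4 hne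
    have hcmem : c.1 ∈ zpowers a.1 ⊓ zpowers b.1 := ⟨hmema, hmemb⟩
    rw [hbot, Subgroup.mem_bot] at hcmem
    exact c.2 hcmem
  have zad : zpowers a.1 = zpowers d.1 := by
    by_contra hne
    have hbot := H2 a.1 d.1 ha4 hd4 hne
    have hcmem : c.1 ∈ zpowers a.1 ⊓ zpowers d.1 := ⟨hmema, hmemd⟩
    rw [hbot, Subgroup.mem_bot] at hcmem
    exact c.2 hcmem
  have hbmem : b.1 ∈ zpowers a.1 := zab ▸ mem_zpowers b.1
  have hdmem : d.1 ∈ zpowers a.1 := zad ▸ mem_zpowers d.1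
  have hb' : b.1 = a.1 ∨ b.1 = a.1 ^ 3 := gen_four ha4 hbmem hb4
  have hd' : d.1 = a.1 ∨ d.1 = a.1 ^ 3 := gen_four ha4 hdmem hd4
  have hb3 : b.1 = a.1 ^ 3 := hb'.resolve_left (fun h => hab (Subtype.ext h.symm))
  have hd3 : d.1 = a.1 ^ 3 := hd'.resolve_left (fun h => had (Subtype.ext h.symm))
  exact hbd (Subtype.ext (hb3.trans hd3.symm))

/-- Claw from two distinct order-4 cyclic subgroups with nontrivial intersection. -/
lemma claw_of_C4 {x y : G} (h4x : orderOf x = 4) (h4y : orderOf y = 4)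
    (hne : zpowers x ≠ zpowers y) (hbot : zpowers x ⊓ zpowers y ≠ ⊥) : ClawTuple G := by
  obtain ⟨z, hz, hz1⟩ := (Subgroup.bot_or_exists_ne_one _).resolve_left hbot
  have hzx : z ∈ zpowers x := hz.1
  have hzy : z ∈ zpowers y := hz.2
  have hzd : orderOf z ∣ 4 := h4x ▸ orderOf_dvd_of_mem_zpowers hzx
  have hz2 : orderOf z = 2 := by
    have hz1' : orderOf z ≠ 1 := fun h => hz1 (orderOf_eq_one_iff.mp h)
    have hz4' : orderOf z ≠ 4 := by
      intro h
      exact hne ((zp_eq_of_order_eq hzx (h.trans h4x.symm)).symm.trans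
        (zp_eq_of_order_eq hzy (h.trans h4y.symm)))
    have hd4 : orderOf z ∣ 2 ^ 2 := by norm_num; exact hzd
    rcases (Nat.dvd_prime_pow Nat.prime_two).mp hd4 with ⟨i, hi, he⟩
    interval_cases i
    · simp at he; exact absurd he hz1
    · simpa using he
    · simp at he; exact absurd he hz4'
  have hzx2 : z = x ^ 2 := invol_eq h4x hzx hz2
  have hzy2 : z = y ^ 2 := invol_eq h4y hzy hz2
  have hsq : x ^ 2 = y ^ 2 := hzx2 ▸ hzy2
  -- claw: centre x^2, leaves x, x^3, y
  have hx3mem : x ^ 3 ∈ zpowers x := Subgroup.pow_mem _ (mem_zpowers x) 3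
  have hzx3 : zpowers (x ^ 3) = zpowers x := zp_eq_of_order_eq hx3mem ((ord_cube h4x).trans h4x.symm)
  have hxx3 : x ≠ x ^ 3 := by
    intro h
    have : x ^ 1 = x ^ 3 := by rwa [pow_one]
    have := pow_eq_pow_iff_modEq.mp this
    rw [h4x] at this
    simpa [Nat.ModEq] using this
  have hxy : x ≠ y := fun h => hne (by rw [h])
  have hx3y : x ^ 3 ≠ y := fun h => hne (hzx3 ▸ (by rw [h]))
  refine clawTuple_of (x ^ 2) x (x ^ 3) y
    (ne_one_of_ord (ord_sq h4x) (by norm_num))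
    (ne_one_of_ord h4x (by norm_num))
    (ne_one_of_ord (ord_cube h4x) (by norm_num))
    (ne_one_of_ord h4y (by norm_num))
    hxx3 hxy hx3y ?_ ?_ ?_ ?_ ?_ ?_
  · exact Or.inl (zp_lt_of_order_ne (Subgroup.pow_mem _ (mem_zpowers x) 2)
      (by rw [ord_sq h4x, h4x]; norm_num))
  · refine Or.inl ?_
    rw [hzx3]
    exact zp_lt_of_order_ne (Subgroup.pow_mem _ (mem_zpowers x) 2)
      (by rw [ord_sq h4x, h4x]; norm_num)
  · refine Or.inl ?_
    rw [hsq]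
    exact zp_lt_of_order_ne (Subgroup.pow_mem _ (mem_zpowers y) 2)
      (by rw [ord_sq h4y, h4y]; norm_num)
  · exact not_adj_of_order_eq (h4x.trans (ord_cube h4x).symm)
  · exact not_adj_of_order_eq (h4x.trans h4y.symm)
  · exact not_adj_of_order_eq ((ord_cube h4x).trans h4y.symm)

end Main

section Constructions

variable {G : Type*} [Group G] [Fintype G]

/-- Claw from two distinct prime divisors of an element order (the second one odd). -/
lemma clawB {x : G} (hnp : ¬(orderOf x).Prime) {p q : ℕ} (hp : p.Prime) (hq : q.Prime)
    (hq2 : q ≠ 2) (hpq : p ≠ q) (hpd : p ∣ orderOf x) (hqd : q ∣ orderOf x) : ClawTuple G := by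
  set n := orderOf x with hn
  have hn0 : n ≠ 0 := (orderOf_pos x).ne'
  have hn1 : n ≠ 1 := by
    intro h
    have := Nat.le_of_dvd (by omega) hpd
    have := hp.two_le
    omega
  have hqn : q ≠ n := fun h => hnp (h ▸ hq)
  have hpn : p ≠ n := fun h => hnp (h ▸ hp)
  have hy : orderOf (x ^ (n / q)) = q := by
    rw [orderOf_pow, ← hn, Nat.gcd_eq_right (Nat.div_dvd_of_dvd hqd), Nat.div_div_self hqd hn0]
  have hzo : orderOf (x ^ (n / p)) = p := by
    rw [orderOf_pow, ← hn, Nat.gcd_eq_right (Nat.div_dvd_of_dvd hpd), Nat.div_div_self hpd hn0]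
  set y := x ^ (n / q) with hydef
  set z := x ^ (n / p) with hzdef
  have hy2 : orderOf (y ^ 2) = q := by
    rw [orderOf_pow, hy,
      Nat.Coprime.gcd_eq_one ((Nat.coprime_primes hq Nat.prime_two).mpr hq2), Nat.div_one]
  have hymem : y ∈ zpowers x := Subgroup.pow_mem _ (mem_zpowers x) _
  have hzmem : z ∈ zpowers x := Subgroup.pow_mem _ (mem_zpowers x) _
  have hy2mem : y ^ 2 ∈ zpowers x := Subgroup.pow_mem _ hymem 2
  have hy2memy : y ^ 2 ∈ zpowers y := Subgroup.pow_mem _ (mem_zpowers y) 2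
  refine clawTuple_of x y (y ^ 2) z (ne_one_of_ord hn.symm hn1)
    (ne_one_of_ord hy hq.ne_one) (ne_one_of_ord hy2 hq.ne_one) (ne_one_of_ord hzo hp.ne_one)
    ?_ ?_ ?_ ?_ ?_ ?_ ?_ ?_ ?_
  · -- y ≠ y ^ 2
    intro h
    have h' : y = y * y := by rw [← sq]; exact h
    exact (ne_one_of_ord hy hq.ne_one) (left_eq_mul.mp h')
  · -- y ≠ z
    intro h
    apply hpq
    rw [← hzo, ← h, hy]
  · -- y ^ 2 ≠ z
    intro h
    apply hpq
    rw [← hzo, ← h, hy2]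
  · exact Or.inr (zp_lt_of_order_ne hymem (by rw [hy, ← hn]; exact hqn))
  · exact Or.inr (zp_lt_of_order_ne hy2mem (by rw [hy2, ← hn]; exact hqn))
  · exact Or.inr (zp_lt_of_order_ne hzmem (by rw [hzo, ← hn]; exact hpn))
  · exact not_adj_of_order_eq (hy.trans hy2.symm)
  · refine not_adj_of_not_dvd ?_ ?_ <;> rw [hy, hzo]
    · exact fun h => hpq ((Nat.prime_dvd_prime_iff_eq hq hp).mp h).symm
    · exact fun h => hpq ((Nat.prime_dvd_prime_iff_eq hp hq).mp h)
  · refine not_adj_of_not_dvd ?_ ?_ <;> rw [hy2, hzo]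
    · exact fun h => hpq ((Nat.prime_dvd_prime_iff_eq hq hp).mp h).symm
    · exact fun h => hpq ((Nat.prime_dvd_prime_iff_eq hp hq).mp h)

/-- Claw from three distinct generators of a cyclic subgroup plus a prime-order element below. -/
lemma clawA' {x : G} {p e2 e3 : ℕ} (hp : p.Prime) (hpd : p ∣ orderOf x) (hpn : p ≠ orderOf x)
    (h2 : Nat.Coprime e2 (orderOf x)) (h3 : Nat.Coprime e3 (orderOf x))
    (he2 : 1 < e2) (he23 : e2 < e3) (he3n : e3 < orderOf x) : ClawTuple G := by
  set n := orderOf x with hn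
  have hn0 : n ≠ 0 := (orderOf_pos x).ne'
  have hn1 : n ≠ 1 := by
    intro h
    have := Nat.le_of_dvd (by omega) hpd
    have := hp.two_le
    omega
  have hgen : ∀ e : ℕ, Nat.Coprime e n → orderOf (x ^ e) = n := by
    intro e he
    rw [orderOf_pow, ← hn, Nat.Coprime.gcd_eq_one he.symm, Nat.div_one]
  have hzp : ∀ e : ℕ, Nat.Coprime e n → zpowers (x ^ e) = zpowers x := by
    intro e he
    exact zp_eq_of_order_eq (Subgroup.pow_mem _ (mem_zpowers x) _) ((hgen e he).trans hn)
  have hdist : ∀ e f : ℕ, e < f → f < n → x ^ e ≠ x ^ f := by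
    intro e f hef hfn h
    have h' := pow_eq_pow_iff_modEq.mp h
    rw [← hn] at h'
    unfold Nat.ModEq at h'
    rw [Nat.mod_eq_of_lt (lt_trans hef hfn), Nat.mod_eq_of_lt hfn] at h'
    omega
  have hc : orderOf (x ^ (n / p)) = p := by
    rw [orderOf_pow, ← hn, Nat.gcd_eq_right (Nat.div_dvd_of_dvd hpd), Nat.div_div_self hpd hn0]
  have hcmem : x ^ (n / p) ∈ zpowers x := Subgroup.pow_mem _ (mem_zpowers x) _
  have hclt : zpowers (x ^ (n / p)) < zpowers x :=
    zp_lt_of_order_ne hcmem (by rw [hc, ← hn]; exact hpn)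
  have hx1 : x = x ^ 1 := (pow_one x).symm
  refine clawTuple_of (x ^ (n / p)) x (x ^ e2) (x ^ e3)
    (ne_one_of_ord hc hp.ne_one) (ne_one_of_ord hn.symm hn1)
    (ne_one_of_ord (hgen e2 h2) hn1) (ne_one_of_ord (hgen e3 h3) hn1)
    ?_ ?_ ?_ ?_ ?_ ?_ ?_ ?_ ?_
  · intro h; exact hdist 1 e2 he2 (lt_trans he23 he3n) (by rw [pow_one]; exact h)
  · intro h; exact hdist 1 e3 (lt_trans he2 he23) he3n (by rw [pow_one]; exact h)
  · exact hdist e2 e3 he23 he3n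
  · exact Or.inl hclt
  · refine Or.inl ?_; rw [hzp e2 h2]; exact hclt
  · refine Or.inl ?_; rw [hzp e3 h3]; exact hclt
  · exact not_adj_of_order_eq (hn.symm.trans (hgen e2 h2).symm)
  · exact not_adj_of_order_eq (hn.symm.trans (hgen e3 h3).symm)
  · exact not_adj_of_order_eq ((hgen e2 h2).trans (hgen e3 h3).symm)

/-- An element of composite order other than 4 yields a claw. -/
lemma claw_of_order {x : G} (h1 : orderOf x ≠ 1) (h4 : orderOf x ≠ 4)
    (hnp : ¬(orderOf x).Prime) : ClawTuple G := by
  set n := orderOf x with hn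
  have hn0 : n ≠ 0 := (orderOf_pos x).ne'
  have hpm : n.minFac.Prime := Nat.minFac_prime h1
  have hpd : n.minFac ∣ n := Nat.minFac_dvd n
  by_cases hall : ∀ q : ℕ, q.Prime → q ∣ n → q = n.minFac
  · set p := n.minFac with hpdef
    have hpn : p ≠ n := fun h => hnp (h ▸ hpm)
    have hdvd2 : p * p ∣ n := by
      have hd : n / p ∣ n := Nat.div_dvd_of_dvd hpd
      have hne1 : n / p ≠ 1 := by
        intro h
        have h' : n = p * 1 := Nat.eq_mul_of_div_eq_right hpd h
        simp at h'
        exact hpn h'.symm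
      obtain ⟨r, hr, hrd⟩ := Nat.exists_prime_and_dvd hne1
      have hrp : r = p := hall r hr (hrd.trans hd)
      have : p ∣ n / p := hrp ▸ hrd
      exact (Nat.dvd_div_iff_mul_dvd hpd).mp this
    have cop : ∀ m : ℕ, ¬ p ∣ m → Nat.Coprime m n := by
      intro m hm
      by_contra hc
      obtain ⟨r, hr, hrm, hrn⟩ := Nat.Prime.not_coprime_iff_dvd.mp hc
      exact hm ((hall r hr hrn) ▸ hrm)
    by_cases hp2 : p = 2
    · have h4n : 4 ∣ n := by
        rw [hp2] at hdvd2
        exact hdvd2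
      have h8 : 5 < n := by
        rcases h4n with ⟨k, hk⟩
        omega
      exact clawA' hpm hpd hpn (cop 3 (by rw [hp2]; norm_num)) (cop 5 (by rw [hp2]; norm_num))
        (by norm_num) (by norm_num) h8
    · have hp3 : 3 ≤ p := by have := hpm.two_le; omega
      have h9 : 4 < n := by
        have hle := Nat.le_of_dvd (Nat.pos_of_ne_zero hn0) hdvd2
        have : 9 ≤ p * p := Nat.mul_le_mul hp3 hp3
        omega
      refine clawA' hpm hpd hpn
        (cop 2 (fun h => hp2 ((Nat.prime_dvd_prime_iff_eq hpm Nat.prime_two).mp h)))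
        (cop 4 (fun h => hp2 ((Nat.prime_dvd_prime_iff_eq hpm Nat.prime_two).mp
          (hpm.dvd_of_dvd_pow (show p ∣ 2 ^ 2 by norm_num; exact h)))))
        (by norm_num) (by norm_num) h9
  · push_neg at hall
    obtain ⟨q, hq, hqd, hqne⟩ := hall
    by_cases hq2 : q = 2
    · exact clawB hnp hq hpm (fun h => hqne (hq2.trans h.symm)) hqne hqd hpd
    · exact clawB hnp hpm hq hq2 (fun h => hqne h.symm) hpd hqd

end Constructions

/-- RP*(G) is claw-free iff every element order lies in {1,4} ∪ primes and any
two distinct cyclic subgroups of order 4 intersect trivially. -/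
theorem stmt13 {G : Type*} [Group G] [Fintype G] :
    IsEmpty (completeBipartiteGraph (Fin 1) (Fin 3) ↪g properRedPowGraph G) ↔
      ((∀ x : G, orderOf x = 1 ∨ orderOf x = 4 ∨ (orderOf x).Prime) ∧
       ∀ x y : G, orderOf x = 4 → orderOf y = 4 →
         Subgroup.zpowers x ≠ Subgroup.zpowers y →
         Subgroup.zpowers x ⊓ Subgroup.zpowers y = ⊥) := by
  rw [← not_nonempty_iff, claw_iff]
  constructor
  · intro h
    refine ⟨?_, ?_⟩
    · intro x
      by_contra hx
      push_neg at hx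
      exact h (claw_of_order hx.1 hx.2.1 hx.2.2)
    · intro x y h4x h4y hne
      by_contra hb
      exact h (claw_of_C4 h4x h4y hne hb)
  · rintro ⟨H1, H2⟩
    exact no_claw H1 H2
end
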